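/- arXiv:1512.08628 — 9 statements merged into one kernel-verified Lean document; each statement's English description precedes it below -/
import Mathlib

section
/- For any subset A of a Banach lattice X, the closed sublattice generated by A equals the closure of span(A)^{∨∧}, where span(A)^{∨∧} denotes the set of finite infima of finite suprema of elements of span(A). -/
open Filter Topology Set

section Defs

variable {E : Type*} [NormedAddCommGroup E] [NormedSpace ℝ E]

/-- A set is weakly compact if it is compact in the weak topology. -/
def WeaklyCompact (K : Set E) : Prop := IsCompact (toWeakSpace ℝ E '' K)

/-- A set is weakly precompact if every sequence in it has a weakly Cauchy subsequence. -/
def WeaklyPrecompact (K : Set E) : Prop :=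
  ∀ x : ℕ → E, (∀ n, x n ∈ K) → ∃ φ : ℕ → ℕ, StrictMono φ ∧
    ∀ f : E →L[ℝ] ℝ, ∃ l : ℝ, Tendsto (fun n => f (x (φ n))) atTop (𝓝 l)

end Defs

section LatDefs

variable {E : Type*} [NormedAddCommGroup E] [Lattice E] [NormedSpace ℝ E]

/-- A closed sublattice: a closed linear subspace closed under `⊔` and `⊓`. -/
def IsClosedSublattice (S : Set E) : Prop :=
  IsClosed S ∧ (0 : E) ∈ S ∧ (∀ x ∈ S, ∀ y ∈ S, x + y ∈ S) ∧
    (∀ c : ℝ, ∀ x ∈ S, c • x ∈ S) ∧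
    (∀ x ∈ S, ∀ y ∈ S, x ⊔ y ∈ S) ∧ (∀ x ∈ S, ∀ y ∈ S, x ⊓ y ∈ S)

/-- `L(A)`: the smallest closed sublattice containing `A`. -/
def sublatticeGen (A : Set E) : Set E := ⋂₀ {S | IsClosedSublattice S ∧ A ⊆ S}

/-- The solid hull of a set. -/
def solidHull (A : Set E) : Set E := ⋃ x ∈ A, Set.Icc (-|x|) |x|

/-- A closed ideal: a closed linear subspace which is solid. -/
def IsClosedIdeal (S : Set E) : Prop :=
  IsClosed S ∧ (0 : E) ∈ S ∧ (∀ x ∈ S, ∀ y ∈ S, x + y ∈ S) ∧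
    (∀ c : ℝ, ∀ x ∈ S, c • x ∈ S) ∧
    (∀ x : E, ∀ y ∈ S, |x| ≤ |y| → x ∈ S)

/-- `I(A)`: the smallest closed ideal containing `A`. -/
def idealGen (A : Set E) : Set E := ⋂₀ {S | IsClosedIdeal S ∧ A ⊆ S}

/-- A band: a closed ideal closed under existing suprema. -/
def IsBand (S : Set E) : Prop :=
  IsClosedIdeal S ∧ ∀ D ⊆ S, ∀ x : E, IsLUB D x → x ∈ S

/-- `B(A)`: the smallest band containing `A`. -/
def bandGen (A : Set E) : Set E := ⋂₀ {S | IsBand S ∧ A ⊆ S}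

/-- Disjoint complement of a set. -/
def disjComplement (A : Set E) : Set E := {x : E | ∀ y ∈ A, |x| ⊓ |y| = 0}

end LatDefs

/-- Order continuity of the norm: every downward directed set with infimum `0`
has norms converging to `0` along the order. -/
def OrderContinuousBL (E : Type*) [NormedAddCommGroup E] [Lattice E] : Prop :=
  ∀ D : Set E, D.Nonempty → DirectedOn (· ≥ ·) D → IsGLB D 0 →
    ∀ ε > 0, ∃ d ∈ D, ∀ e ∈ D, e ≤ d → ‖e‖ < ε

/-- Density character of a topological space. -/
noncomputable def densChar (T : Type*) [TopologicalSpace T] : Cardinal :=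
  sInf {c : Cardinal | ∃ s : Set T, Dense s ∧ Cardinal.mk s = c}

/-- Finite suprema of elements of a set. -/
def finSups {E : Type*} [NormedAddCommGroup E] [Lattice E] [NormedSpace ℝ E] (A : Set E) : Set E :=
  {x | ∃ (s : Finset E) (hs : s.Nonempty), ↑s ⊆ A ∧ s.sup' hs id = x}

/-- Finite infima of elements of a set. -/
def finInfs {E : Type*} [NormedAddCommGroup E] [Lattice E] [NormedSpace ℝ E] (A : Set E) : Set E :=
  {x | ∃ (s : Finset E) (hs : s.Nonempty), ↑s ⊆ A ∧ s.inf' hs id = x}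


section AuxProof0

variable {Y : Type*} [NormedAddCommGroup Y] [Lattice Y] [IsOrderedAddMonoid Y] [HasSolidNorm Y]
  [NormedSpace ℝ Y]

private lemma aux_two_nsmul_sup (x y : Y) : (2:ℕ) • (x ⊔ y) = (2:ℕ) • x ⊔ (2:ℕ) • y := by
  rw [two_nsmul_sup_eq_add_add_abs_sub]
  have habs : |y - x| = (y - x) ⊔ -(y - x) := rfl
  rw [habs, add_sup, two_nsmul, two_nsmul, sup_comm]
  congr 1 <;> abel

private lemma aux_two_smul_cancel : ∀ u v : Y, (2:ℝ) • u = (2:ℝ) • v → u = v := by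
  intro u v h
  have := congrArg (fun z => (2:ℝ)⁻¹ • z) h
  simpa [smul_smul] using this

private lemma aux_half_smul_sup (x y : Y) :
    ((2:ℝ)⁻¹) • (x ⊔ y) = (2:ℝ)⁻¹ • x ⊔ (2:ℝ)⁻¹ • y := by
  have h2 : ∀ z : Y, (2:ℝ) • z = (2:ℕ) • z := by
    intro z; rw [two_smul, two_nsmul]
  apply aux_two_smul_cancel
  rw [smul_inv_smul₀ (two_ne_zero (α := ℝ))]
  have : (2:ℝ) • ((2:ℝ)⁻¹ • x ⊔ (2:ℝ)⁻¹ • y) = (2:ℝ) • ((2:ℝ)⁻¹ • x) ⊔ (2:ℝ) • ((2:ℝ)⁻¹ • y) := by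
    rw [h2, h2, h2, aux_two_nsmul_sup]
  rw [this, smul_inv_smul₀ (two_ne_zero (α := ℝ)), smul_inv_smul₀ (two_ne_zero (α := ℝ))]

private lemma aux_half_smul_inf (x y : Y) :
    ((2:ℝ)⁻¹) • (x ⊓ y) = (2:ℝ)⁻¹ • x ⊓ (2:ℝ)⁻¹ • y := by
  have h : x ⊓ y = -(-x ⊔ -y) := by rw [neg_sup, neg_neg, neg_neg]
  rw [h, smul_neg, aux_half_smul_sup, neg_sup, smul_neg, smul_neg, neg_neg, neg_neg]

private lemma aux_add_mem (V : Submodule ℝ Y) :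
    ∀ x ∈ latticeClosure (V : Set Y), ∀ y ∈ latticeClosure (V : Set Y),
      x + y ∈ latticeClosure (V : Set Y) := by
  have hsub : IsSublattice (latticeClosure (V : Set Y)) := isSublattice_latticeClosure
  have step1 : ∀ v ∈ (V : Set Y), ∀ x ∈ latticeClosure (V : Set Y),
      x + v ∈ latticeClosure (V : Set Y) := by
    intro v hv
    have : latticeClosure (V : Set Y) ⊆ {x | x + v ∈ latticeClosure (V : Set Y)} := by
      refine latticeClosure_min (fun a ha => subset_latticeClosure (V.add_mem ha hv)) ?_
      constructor
      · intro a ha b hb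
        simp only [Set.mem_setOf_eq] at *
        rw [sup_add]; exact hsub.1 ha hb
      · intro a ha b hb
        simp only [Set.mem_setOf_eq] at *
        rw [inf_add]; exact hsub.2 ha hb
    exact fun x hx => this hx
  intro x hx
  have : latticeClosure (V : Set Y) ⊆ {y | x + y ∈ latticeClosure (V : Set Y)} := by
    refine latticeClosure_min (fun v hv => step1 v hv x hx) ?_
    constructor
    · intro a ha b hb
      simp only [Set.mem_setOf_eq] at *
      rw [add_sup]; exact hsub.1 ha hb
    · intro a ha b hb
      simp only [Set.mem_setOf_eq] at *
      rw [add_inf]; exact hsub.2 ha hb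
  exact fun y hy => this hy

private lemma aux_neg_mem (V : Submodule ℝ Y) :
    ∀ x ∈ latticeClosure (V : Set Y), -x ∈ latticeClosure (V : Set Y) := by
  have hsub : IsSublattice (latticeClosure (V : Set Y)) := isSublattice_latticeClosure
  have : latticeClosure (V : Set Y) ⊆ {x | -x ∈ latticeClosure (V : Set Y)} := by
    refine latticeClosure_min (fun a ha => subset_latticeClosure (V.neg_mem ha)) ?_
    constructor
    · intro a ha b hb
      simp only [Set.mem_setOf_eq] at *
      rw [neg_sup]; exact hsub.2 ha hb
    · intro a ha b hb
      simp only [Set.mem_setOf_eq] at *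
      rw [neg_inf]; exact hsub.1 ha hb
  exact fun x hx => this hx

private lemma aux_half_mem (V : Submodule ℝ Y) :
    ∀ x ∈ latticeClosure (V : Set Y), (2:ℝ)⁻¹ • x ∈ latticeClosure (V : Set Y) := by
  have hsub : IsSublattice (latticeClosure (V : Set Y)) := isSublattice_latticeClosure
  have : latticeClosure (V : Set Y) ⊆ {x | (2:ℝ)⁻¹ • x ∈ latticeClosure (V : Set Y)} := by
    refine latticeClosure_min (fun a ha => subset_latticeClosure (V.smul_mem _ ha)) ?_
    constructor
    · intro a ha b hb
      simp only [Set.mem_setOf_eq] at *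
      rw [aux_half_smul_sup]; exact hsub.1 ha hb
    · intro a ha b hb
      simp only [Set.mem_setOf_eq] at *
      rw [aux_half_smul_inf]; exact hsub.2 ha hb
  exact fun x hx => this hx

private lemma aux_dyadic_mem (V : Submodule ℝ Y) (m : ℤ) (k : ℕ) :
    ∀ x ∈ latticeClosure (V : Set Y),
      ((m:ℝ) / 2 ^ k) • x ∈ latticeClosure (V : Set Y) := by
  have hpow : ∀ (k : ℕ), ∀ x ∈ latticeClosure (V : Set Y),
      ((2:ℝ) ^ k)⁻¹ • x ∈ latticeClosure (V : Set Y) := by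
    intro k
    induction k with
    | zero => intro x hx; simpa using hx
    | succ n ih =>
      intro x hx
      have h : ((2:ℝ) ^ (n+1))⁻¹ • x = (2:ℝ)⁻¹ • (((2:ℝ) ^ n)⁻¹ • x) := by
        rw [smul_smul]
        congr 1
        rw [pow_succ, mul_inv]
        ring
      rw [h]
      exact aux_half_mem V _ (ih x hx)
  have hz : ∀ (m : ℤ), ∀ x ∈ latticeClosure (V : Set Y),
      m • x ∈ latticeClosure (V : Set Y) := by
    intro m
    induction m using Int.induction_on with
    | zero => intro x _; simpa using subset_latticeClosure V.zero_mem
    | succ i ih =>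
      intro x hx
      have h : ((i:ℤ) + 1) • x = (i:ℤ) • x + x := by
        rw [add_smul, one_smul]
      rw [h]
      exact aux_add_mem V _ (ih x hx) _ hx
    | pred i ih =>
      intro x hx
      have h : (-(i:ℤ) - 1) • x = (-(i:ℤ)) • x + (-x) := by
        rw [sub_smul, one_smul, sub_eq_add_neg]
      rw [h]
      exact aux_add_mem V _ (ih x hx) _ (aux_neg_mem V x hx)
  intro x hx
  have h : ((m:ℝ) / 2 ^ k) • x = (m:ℝ) • (((2:ℝ) ^ k)⁻¹ • x) := by
    rw [smul_smul, div_eq_mul_inv]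
  rw [h, Int.cast_smul_eq_zsmul]
  exact hz m _ (hpow k x hx)

private lemma aux_dyadic_dense (c : ℝ) :
    c ∈ closure {t : ℝ | ∃ (m : ℤ) (k : ℕ), t = (m:ℝ) / 2 ^ k} := by
  rw [Metric.mem_closure_iff]
  intro ε hε
  obtain ⟨k, hk⟩ := exists_pow_lt_of_lt_one hε (by norm_num : (2:ℝ)⁻¹ < 1)
  have h2k : (0:ℝ) < 2 ^ k := by positivity
  have hk' : (1:ℝ) / 2 ^ k < ε := by
    rw [inv_pow] at hk
    rw [one_div]
    exact hk
  refine ⟨(⌊c * 2 ^ k⌋ : ℝ) / 2 ^ k, ⟨⌊c * 2 ^ k⌋, k, rfl⟩, ?_⟩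
  have h1 : (⌊c * 2 ^ k⌋ : ℝ) ≤ c * 2 ^ k := Int.floor_le _
  have h2 : c * 2 ^ k < ⌊c * 2 ^ k⌋ + 1 := Int.lt_floor_add_one _
  rw [Real.dist_eq, abs_lt]
  constructor
  · have hle : (⌊c * 2 ^ k⌋ : ℝ) / 2 ^ k ≤ c := by
      rw [div_le_iff₀ h2k]; exact h1
    linarith
  · have hlt : c < ((⌊c * 2 ^ k⌋ : ℝ) + 1) / 2 ^ k := by
      rw [lt_div_iff₀ h2k]; exact h2
    have : c - (⌊c * 2 ^ k⌋ : ℝ) / 2 ^ k < 1 / 2 ^ k := by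
      rw [sub_lt_iff_lt_add]
      calc c < ((⌊c * 2 ^ k⌋ : ℝ) + 1) / 2 ^ k := hlt
        _ = 1 / 2 ^ k + (⌊c * 2 ^ k⌋ : ℝ) / 2 ^ k := by ring
    linarith

end AuxProof0

/-- L(A) = closure of span(A)^{∨∧}. -/
theorem sublatticeGen_eq_closure_finInfs_finSups_span
    {X : Type*} [NormedAddCommGroup X] [Lattice X] [IsOrderedAddMonoid X] [HasSolidNorm X]
      [NormedSpace ℝ X] [CompleteSpace X]
    (A : Set X) :
    sublatticeGen A =
      closure (finInfs (finSups ((Submodule.span ℝ A : Submodule ℝ X) : Set X))) := by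
  classical
  have hfin : finInfs (finSups ((Submodule.span ℝ A : Submodule ℝ X) : Set X))
      = latticeClosure ((Submodule.span ℝ A : Submodule ℝ X) : Set X) := by
    have h1 : finInfs (finSups ((Submodule.span ℝ A : Submodule ℝ X) : Set X))
        = infClosure (supClosure ((Submodule.span ℝ A : Submodule ℝ X) : Set X)) := rfl
    rw [h1]
    letI : DistribLattice X := AddCommGroup.toDistribLattice X
    exact infClosure_supClosure _
  rw [hfin]
  set V : Submodule ℝ X := Submodule.span ℝ A with hV
  have hsub : IsSublattice (latticeClosure (V : Set X)) := isSublattice_latticeClosure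
  apply subset_antisymm
  · apply Set.sInter_subset_of_mem
    constructor
    · refine ⟨isClosed_closure, ?_, ?_, ?_, ?_, ?_⟩
      · exact subset_closure (subset_latticeClosure V.zero_mem)
      · intro x hx y hy
        exact map_mem_closure₂ continuous_add hx hy (aux_add_mem V)
      · intro c x hx
        have hSclosed : IsClosed {t : ℝ | t • x ∈ closure (latticeClosure (V : Set X))} :=
          isClosed_closure.preimage (continuous_id.smul continuous_const)
        have hD : {t : ℝ | ∃ (m : ℤ) (k : ℕ), t = (m:ℝ) / 2 ^ k}
            ⊆ {t : ℝ | t • x ∈ closure (latticeClosure (V : Set X))} := by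
          rintro t ⟨m, k, rfl⟩
          exact map_mem_closure (continuous_const.smul continuous_id) hx
            (fun a ha => aux_dyadic_mem V m k a ha)
        exact (hSclosed.closure_subset_iff.mpr hD) (aux_dyadic_dense c)
      · intro x hx y hy
        exact map_mem_closure₂ continuous_sup hx hy (fun a ha b hb => hsub.1 ha hb)
      · intro x hx y hy
        exact map_mem_closure₂ continuous_inf hx hy (fun a ha b hb => hsub.2 ha hb)
    · exact fun a ha => subset_closure (subset_latticeClosure (Submodule.subset_span ha))
  · intro x hx
    simp only [sublatticeGen, Set.mem_sInter]
    rintro S ⟨⟨hScl, hS0, hSadd, hSsmul, hSsup, hSinf⟩, hSA⟩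
    have hVS : (V : Set X) ⊆ S := by
      let p : Submodule ℝ X :=
        { carrier := S
          zero_mem' := hS0
          add_mem' := fun {a b} ha hb => hSadd a ha b hb
          smul_mem' := fun c x hx => hSsmul c x hx }
      have : V ≤ p := Submodule.span_le.mpr hSA
      exact this
    have hWS : latticeClosure (V : Set X) ⊆ S :=
      latticeClosure_min hVS ⟨fun a ha b hb => hSsup a ha b hb, fun a ha b hb => hSinf a ha b hb⟩
    exact closure_minimal hWS hScl hx
end

section
/- If T : X → Y is a lattice homomorphism between Banach lattices with dense range and K ⊆ X is a set with L(K) = X, then L(T(K)) = Y. Consequently, a lattice-homomorphic dense-range image of an LWCG Banach lattice is LWCG. -/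
open Filter Topology Set

/-- a dense-range lattice homomorphism sends lattice-generating sets to
lattice-generating sets; consequently, such an image of an LWCG lattice is LWCG. -/
theorem latticeHom_denseRange_LWCG
    {X Y : Type*} [NormedAddCommGroup X] [Lattice X] [IsOrderedAddMonoid X] [HasSolidNorm X] [NormedSpace ℝ X] [CompleteSpace X]
    [NormedAddCommGroup Y] [Lattice Y] [IsOrderedAddMonoid Y] [HasSolidNorm Y] [NormedSpace ℝ Y] [CompleteSpace Y]
    (T : X →L[ℝ] Y) (hlat : ∀ x y : X, T (x ⊔ y) = T x ⊔ T y)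
    (hdense : DenseRange T) :
    (∀ K : Set X, sublatticeGen K = Set.univ → sublatticeGen (T '' K) = Set.univ) ∧
    ((∃ K : Set X, WeaklyCompact K ∧ sublatticeGen K = Set.univ) →
      ∃ K' : Set Y, WeaklyCompact K' ∧ sublatticeGen K' = Set.univ) := by
  have hinf : ∀ x y : X, T (x ⊓ y) = T x ⊓ T y := by
    intro x y
    have h : x ⊓ y = x + y - x ⊔ y := by
      rw [eq_sub_iff_add_eq, inf_add_sup]
    rw [h, map_sub, map_add, hlat, eq_comm, eq_sub_iff_add_eq, inf_add_sup]
  have main : ∀ K : Set X, sublatticeGen K = Set.univ →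
      sublatticeGen (T '' K) = Set.univ := by
    intro K hK
    rw [sublatticeGen, Set.sInter_eq_univ]
    rintro S ⟨hS, hTK⟩
    -- preimage of S under T is a closed sublattice containing K
    have hpre : IsClosedSublattice (T ⁻¹' S) := by
      obtain ⟨hc, h0, hadd, hsmul, hsup, hinfS⟩ := hS
      refine ⟨hc.preimage T.continuous, by simp [h0], ?_, ?_, ?_, ?_⟩
      · intro x hx y hy; simp only [Set.mem_preimage, map_add]; exact hadd _ hx _ hy
      · intro c x hx; simp only [Set.mem_preimage, map_smul]; exact hsmul _ _ hx
      · intro x hx y hy; simp only [Set.mem_preimage, hlat]; exact hsup _ hx _ hy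
      · intro x hx y hy; simp only [Set.mem_preimage, hinf]; exact hinfS _ hx _ hy
    have hKsub : K ⊆ T ⁻¹' S := fun x hx => hTK ⟨x, hx, rfl⟩
    have : sublatticeGen K ⊆ T ⁻¹' S := Set.sInter_subset_of_mem ⟨hpre, hKsub⟩
    rw [hK] at this
    have hrange : Set.range T ⊆ S := by
      rintro _ ⟨x, rfl⟩; exact this (Set.mem_univ x)
    have : (Set.univ : Set Y) ⊆ S := by
      rw [← hS.1.closure_eq]
      calc (Set.univ : Set Y) = closure (Set.range T) := (hdense.closure_range).symm
        _ ⊆ closure S := closure_mono hrange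
    exact Set.eq_univ_of_univ_subset this
  refine ⟨main, ?_⟩
  rintro ⟨K, hKc, hKgen⟩
  refine ⟨T '' K, ?_, main K hKgen⟩
  have himg : toWeakSpace ℝ Y '' (T '' K) =
      WeakSpace.map T '' (toWeakSpace ℝ X '' K) := by
    rw [Set.image_image, Set.image_image]; rfl
  unfold WeaklyCompact
  rw [himg]
  exact hKc.image (WeakSpace.map T).continuous
end

section
/- If T : X → Y is an interval preserving lattice homomorphism between Banach lattices with dense range and K ⊆ X satisfies I(K) = X, then I(T(K)) = Y. Consequently, such an image of an IWCG Banach lattice is IWCG. -/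
open Filter Topology Set

/-- a dense-range interval preserving lattice homomorphism sends
ideal-generating sets to ideal-generating sets; consequently, such an image of an
IWCG lattice is IWCG. -/
theorem intervalPreserving_latticeHom_denseRange_IWCG
    {X Y : Type*} [NormedAddCommGroup X] [Lattice X] [IsOrderedAddMonoid X] [HasSolidNorm X] [NormedSpace ℝ X] [CompleteSpace X]
    [NormedAddCommGroup Y] [Lattice Y] [IsOrderedAddMonoid Y] [HasSolidNorm Y] [NormedSpace ℝ Y] [CompleteSpace Y]
    (T : X →L[ℝ] Y) (hlat : ∀ x y : X, T (x ⊔ y) = T x ⊔ T y)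
    (hpos : ∀ x : X, 0 ≤ x → 0 ≤ T x)
    (hint : ∀ x : X, 0 ≤ x → T '' Set.Icc 0 x = Set.Icc 0 (T x))
    (hdense : DenseRange T) :
    (∀ K : Set X, idealGen K = Set.univ → idealGen (T '' K) = Set.univ) ∧
    ((∃ K : Set X, WeaklyCompact K ∧ idealGen K = Set.univ) →
      ∃ K' : Set Y, WeaklyCompact K' ∧ idealGen K' = Set.univ) := by
  have habs : ∀ x : X, T |x| = |T x| := by
    intro x
    have h1 : |x| = x ⊔ -x := rfl
    have h2 : |T x| = T x ⊔ -(T x) := rfl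
    rw [h1, hlat, map_neg, ← h2]
  have hmono : ∀ x y : X, x ≤ y → T x ≤ T y := by
    intro x y h
    have := hpos (y - x) (by simpa using h)
    simpa [map_sub, sub_nonneg] using this
  have main : ∀ K : Set X, idealGen K = Set.univ → idealGen (T '' K) = Set.univ := by
    intro K hK
    set J := idealGen (T '' K) with hJ
    have hJclosed : IsClosed J := by
      apply isClosed_sInter
      rintro S ⟨⟨hc, _⟩, _⟩
      exact hc
    have hJideal : IsClosedIdeal J ∧ T '' K ⊆ J := by
      constructor
      · refine ⟨hJclosed, ?_, ?_, ?_, ?_⟩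
        · intro S hS; exact hS.1.2.1
        · intro x hx y hy S hS
          exact hS.1.2.2.1 x (hx S hS) y (hy S hS)
        · intro c x hx S hS
          exact hS.1.2.2.2.1 c x (hx S hS)
        · intro x y hy h S hS
          exact hS.1.2.2.2.2 x y (hy S hS) h
      · intro z hz S hS
        exact hS.2 hz
    have hpre : IsClosedIdeal (T ⁻¹' J) ∧ K ⊆ T ⁻¹' J := by
      obtain ⟨⟨hc, h0, hadd, hsmul, hsolid⟩, hsub⟩ := hJideal
      refine ⟨⟨hc.preimage T.continuous, by simpa using h0, ?_, ?_, ?_⟩, ?_⟩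
      · intro x hx y hy
        simpa [map_add] using hadd _ hx _ hy
      · intro c x hx
        simpa [map_smul] using hsmul c _ hx
      · intro x y hy hle
        have hle' : |T x| ≤ |T y| := by
          rw [← habs, ← habs]; exact hmono _ _ hle
        exact hsolid _ _ hy hle'
      · intro x hx
        exact hsub ⟨x, hx, rfl⟩
    have hrange : Set.range T ⊆ J := by
      rintro _ ⟨x, rfl⟩
      have hx : x ∈ idealGen K := by rw [hK]; trivial
      exact hx _ ⟨hpre.1, hpre.2⟩
    apply Set.eq_univ_of_forall
    intro y
    exact hJclosed.closure_subset_iff.mpr hrange (hdense y)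
  refine ⟨main, ?_⟩
  rintro ⟨K, hKwc, hKgen⟩
  refine ⟨T '' K, ?_, main K hKgen⟩
  unfold WeaklyCompact at *
  have hcomp := hKwc.image (WeakSpace.map (𝕜 := ℝ) T).continuous
  convert hcomp using 1
  ext y
  simp only [Set.mem_image]
  constructor
  · rintro ⟨_, ⟨x, hx, rfl⟩, rfl⟩
    exact ⟨toWeakSpace ℝ X x, ⟨x, hx, rfl⟩, rfl⟩
  · rintro ⟨_, ⟨x, hx, rfl⟩, rfl⟩
    exact ⟨T x, ⟨x, hx, rfl⟩, rfl⟩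
end

section
/- A Banach lattice X has a quasi-interior point if and only if X = I(C) for some separable subset C ⊆ X, and X has a weak order unit if and only if X = B(C) for some separable subset C ⊆ X. -/
open Filter Topology Set

section AuxLemmas

variable {X : Type*} [NormedAddCommGroup X] [Lattice X] [HasSolidNorm X] [IsOrderedAddMonoid X]
  [NormedSpace ℝ X]

lemma aux_nonneg_of_two_pow_nsmul {a : X} :
    ∀ k : ℕ, 0 ≤ (2 ^ k : ℕ) • a → 0 ≤ a := by
  intro k
  induction k with
  | zero => intro h; simpa using h
  | succ k ih =>
    intro h
    apply ih
    apply nsmul_two_semiclosed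
    rw [show (2:ℕ) • 2 ^ k • a = (2 * 2 ^ k) • a from (mul_smul _ _ _).symm, ← pow_succ']
    exact h

lemma aux_isClosedIdeal_idealGen (A : Set X) : IsClosedIdeal (idealGen A) := by
  refine ⟨isClosed_sInter fun S hS => hS.1.1, ?_, ?_, ?_, ?_⟩
  · exact Set.mem_sInter.2 fun S hS => hS.1.2.1
  · intro x hx y hy
    exact Set.mem_sInter.2 fun S hS => hS.1.2.2.1 x (hx S hS) y (hy S hS)
  · intro c x hx
    exact Set.mem_sInter.2 fun S hS => hS.1.2.2.2.1 c x (hx S hS)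
  · intro x y hy hxy
    exact Set.mem_sInter.2 fun S hS => hS.1.2.2.2.2 x y (hy S hS) hxy

lemma aux_subset_idealGen (A : Set X) : A ⊆ idealGen A :=
  fun a ha => Set.mem_sInter.2 fun _ hS => hS.2 ha

lemma aux_isBand_bandGen (A : Set X) : IsBand (bandGen A) := by
  constructor
  · refine ⟨isClosed_sInter fun S hS => hS.1.1.1, ?_, ?_, ?_, ?_⟩
    · exact Set.mem_sInter.2 fun S hS => hS.1.1.2.1
    · intro x hx y hy
      exact Set.mem_sInter.2 fun S hS => hS.1.1.2.2.1 x (hx S hS) y (hy S hS)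
    · intro c x hx
      exact Set.mem_sInter.2 fun S hS => hS.1.1.2.2.2.1 c x (hx S hS)
    · intro x y hy hxy
      exact Set.mem_sInter.2 fun S hS => hS.1.1.2.2.2.2 x y (hy S hS) hxy
  · intro D hD x hx
    exact Set.mem_sInter.2 fun S hS => hS.1.2 D (fun d hd => hD hd S hS) x hx

lemma aux_subset_bandGen (A : Set X) : A ⊆ bandGen A :=
  fun a ha => Set.mem_sInter.2 fun _ hS => hS.2 ha

/-- Key construction: from a separable set we build a single positive vector
generating (as a closed ideal) everything that `C` touches. -/
lemma aux_exists_unit [CompleteSpace X] (C : Set X)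
    (hC : TopologicalSpace.IsSeparable C) :
    ∃ u : X, 0 ≤ u ∧ ∀ S : Set X, IsClosedIdeal S → u ∈ S → C ⊆ S := by
  obtain ⟨c, hc, hCc⟩ := hC
  obtain ⟨f, hf⟩ := (hc.insert 0).exists_eq_range (Set.insert_nonempty _ _)
  have hk : ∀ n : ℕ, ∃ k : ℕ, ‖f n‖ ≤ (2 : ℝ) ^ k := by
    intro n
    obtain ⟨N, hN⟩ := exists_nat_gt ‖f n‖
    refine ⟨N, hN.le.trans ?_⟩
    exact_mod_cast (Nat.lt_two_pow_self : N < 2 ^ N).le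
  choose k hk using hk
  set g : ℕ → X := fun n => ((2 : ℝ) ^ (n + k n))⁻¹ • |f n| with hg
  have hgnorm : ∀ n, ‖g n‖ ≤ (1 / 2 : ℝ) ^ n := by
    intro n
    have h2 : (0:ℝ) < 2 ^ (n + k n) := by positivity
    rw [hg]
    simp only [norm_smul, norm_inv, norm_pow, Real.norm_two, norm_abs_eq_norm]
    calc ((2:ℝ) ^ (n + k n))⁻¹ * ‖f n‖
        ≤ ((2:ℝ) ^ (n + k n))⁻¹ * 2 ^ (k n) := by gcongr; exact hk n
      _ = (1 / 2 : ℝ) ^ n := by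
          rw [pow_add, div_pow, one_pow]
          field_simp
  have hsum : Summable g :=
    Summable.of_norm_bounded summable_geometric_two hgnorm
  have hg0 : ∀ n, 0 ≤ g n := by
    intro n
    apply aux_nonneg_of_two_pow_nsmul (n + k n)
    have h1 : ((2 ^ (n + k n) : ℕ) : ℝ) • g n = |f n| := by
      rw [hg]
      push_cast
      exact smul_inv_smul₀ (by positivity) _
    rw [Nat.cast_smul_eq_nsmul] at h1
    rw [h1]
    exact abs_nonneg _
  set u := ∑' n, g n with hu
  have hu0 : 0 ≤ u := tsum_nonneg hg0
  have hgu : ∀ n, g n ≤ u := fun n => Summable.le_tsum hsum n fun m _ => hg0 m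
  refine ⟨u, hu0, ?_⟩
  rintro S ⟨hScl, h0, hadd, hsmul, hsolid⟩ huS
  have hfS : ∀ n, f n ∈ S := by
    intro n
    have hgS : g n ∈ S := by
      refine hsolid _ u huS ?_
      rw [abs_of_nonneg (hg0 n), abs_of_nonneg hu0]
      exact hgu n
    have habs : |f n| ∈ S := by
      have h2 := hsmul ((2 : ℝ) ^ (n + k n)) _ hgS
      rwa [hg, smul_inv_smul₀ (by positivity)] at h2
    refine hsolid _ _ habs ?_
    rw [abs_abs]
  have hcl : closure (Set.range f) ⊆ S :=
    hScl.closure_subset_iff.mpr (Set.range_subset_iff.mpr hfS)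
  intro x hx
  apply hcl
  rw [← hf]
  exact closure_mono (Set.subset_insert 0 c) (hCc hx)

end AuxLemmas

/-- X has a quasi-interior point iff X = I(C) for some separable C,
and X has a weak order unit iff X = B(C) for some separable C. -/
theorem quasiInterior_and_weakOrderUnit_iff_separably_generated
    {X : Type*} [NormedAddCommGroup X] [Lattice X] [HasSolidNorm X] [IsOrderedAddMonoid X]
      [NormedSpace ℝ X] [CompleteSpace X] :
    ((∃ u : X, 0 ≤ u ∧ idealGen ({u} : Set X) = Set.univ) ↔
      (∃ C : Set X, TopologicalSpace.IsSeparable C ∧ idealGen C = Set.univ)) ∧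
    ((∃ u : X, 0 ≤ u ∧ bandGen ({u} : Set X) = Set.univ) ↔
      (∃ C : Set X, TopologicalSpace.IsSeparable C ∧ bandGen C = Set.univ)) := by
  constructor
  · constructor
    · rintro ⟨u, -, hu⟩
      exact ⟨{u}, (Set.countable_singleton u).isSeparable, hu⟩
    · rintro ⟨C, hsep, hgen⟩
      obtain ⟨u, hu0, hu⟩ := aux_exists_unit C hsep
      refine ⟨u, hu0, ?_⟩
      apply Set.eq_univ_of_univ_subset
      rw [← hgen]
      exact Set.sInter_subset_of_mem ⟨aux_isClosedIdeal_idealGen _,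
        hu _ (aux_isClosedIdeal_idealGen _) (aux_subset_idealGen _ rfl)⟩
  · constructor
    · rintro ⟨u, -, hu⟩
      exact ⟨{u}, (Set.countable_singleton u).isSeparable, hu⟩
    · rintro ⟨C, hsep, hgen⟩
      obtain ⟨u, hu0, hu⟩ := aux_exists_unit C hsep
      refine ⟨u, hu0, ?_⟩
      apply Set.eq_univ_of_univ_subset
      rw [← hgen]
      exact Set.sInter_subset_of_mem ⟨aux_isBand_bandGen _,
        hu _ (aux_isBand_bandGen _).1 (aux_subset_bandGen _ rfl)⟩
end

section
/- If X is an LWCG Banach lattice, then the density character of X equals the density character of (X*, w*). -/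
open Filter Topology Set

section DensCharHelpers

open Cardinal

universe u

lemma densChar_le {T : Type*} [TopologicalSpace T] {s : Set T} (hs : Dense s) :
    densChar T ≤ #s :=
  csInf_le ⟨0, fun _ _ => zero_le⟩ ⟨s, hs, rfl⟩

lemma exists_dense_densChar (T : Type*) [TopologicalSpace T] :
    ∃ s : Set T, Dense s ∧ #s = densChar T :=
  csInf_mem (⟨#(univ : Set T), univ, dense_univ, rfl⟩ :
    {c : Cardinal | ∃ s : Set T, Dense s ∧ Cardinal.mk s = c}.Nonempty)

lemma densChar_subsingleton (T : Type*) [TopologicalSpace T] [Subsingleton T] [Nonempty T] :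
    densChar T = 1 := by
  apply le_antisymm
  · have : #(univ : Set T) = 1 := by
      rw [Cardinal.eq_one_iff_unique]
      exact ⟨inferInstance, ⟨⟨Classical.arbitrary T, trivial⟩⟩⟩
    exact (densChar_le dense_univ).trans this.le
  · refine le_csInf ⟨_, univ, dense_univ, rfl⟩ ?_
    rintro c ⟨s, hs, rfl⟩
    rw [Cardinal.one_le_iff_ne_zero, Cardinal.mk_ne_zero_iff]
    exact hs.nonempty.to_subtype

lemma aleph0_le_densChar (T : Type*) [TopologicalSpace T] [T1Space T] [Infinite T] :
    ℵ₀ ≤ densChar T := by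
  refine le_csInf ⟨_, univ, dense_univ, rfl⟩ ?_
  rintro c ⟨s, hs, rfl⟩
  rw [Cardinal.aleph0_le_mk_iff, Set.infinite_coe_iff]
  intro hfin
  have : closure s = s := hfin.isClosed.closure_eq
  have : (univ : Set T) = s := by rw [← hs.closure_eq, this]
  exact Set.infinite_univ (this ▸ hfin)

lemma infinite_of_module {M : Type*} [AddCommGroup M] [Module ℝ M] {x : M} (hx : x ≠ 0) :
    Infinite M := by
  refine Infinite.of_injective (fun t : ℝ => t • x) (fun a b hab => ?_)
  by_contra hne
  have h0 : (a - b) • x = 0 := by simp only [sub_smul]; simp only at hab; rw [hab, sub_self]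
  have : x = 0 := by
    have := congrArg (fun y => (a - b)⁻¹ • y) h0
    simpa [smul_smul, inv_mul_cancel₀ (sub_ne_zero.2 hne)] using this
  exact hx this

lemma exists_genSet {α : Type u} (I : Type u) [Countable I] (op : I → α → α → α) (D : Set α) :
    ∃ Q : Set α, D ⊆ Q ∧ (∀ i, ∀ x ∈ Q, ∀ y ∈ Q, op i x y ∈ Q) ∧ #Q ≤ max #D ℵ₀ := by
  classical
  set Qs : ℕ → Set α := fun n =>
    Nat.rec D (fun _ Qn => Qn ∪ ⋃ i : I, Set.image2 (op i) Qn Qn) n with hQs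
  have hsucc : ∀ n, Qs (n + 1) = Qs n ∪ ⋃ i : I, Set.image2 (op i) (Qs n) (Qs n) := fun n => rfl
  have hmono : Monotone Qs := monotone_nat_of_le_succ fun n => by
    rw [hsucc]; exact subset_union_left
  refine ⟨⋃ n, Qs n, subset_iUnion Qs 0, ?_, ?_⟩
  · intro i x hx y hy
    obtain ⟨m, hm⟩ := mem_iUnion.1 hx
    obtain ⟨n, hn⟩ := mem_iUnion.1 hy
    have hx' : x ∈ Qs (max m n) := hmono (le_max_left m n) hm
    have hy' : y ∈ Qs (max m n) := hmono (le_max_right m n) hn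
    refine mem_iUnion.2 ⟨max m n + 1, ?_⟩
    rw [hsucc]
    exact Or.inr (mem_iUnion.2 ⟨i, mem_image2_of_mem hx' hy'⟩)
  · set c := max #D ℵ₀ with hc
    have hc0 : ℵ₀ ≤ c := le_max_right _ _
    have hn : ∀ n, #(Qs n) ≤ c := by
      intro n
      induction n with
      | zero => exact le_max_left _ _
      | succ n ih =>
        rw [hsucc]
        refine (Cardinal.mk_union_le _ _).trans ?_
        have h2 : #(⋃ i : I, Set.image2 (op i) (Qs n) (Qs n)) ≤ c := by
          refine (Cardinal.mk_iUnion_le _).trans ?_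
          have : ⨆ i : I, #(Set.image2 (op i) (Qs n) (Qs n)) ≤ c := by
            refine ciSup_le' fun i => ?_
            exact Cardinal.mk_image2_le.trans
              ((mul_le_mul' ih ih).trans_eq (Cardinal.mul_eq_self hc0))
          refine (mul_le_mul' (Cardinal.mk_le_aleph0) this).trans ?_
          exact (mul_le_mul' hc0 le_rfl).trans_eq (Cardinal.mul_eq_self hc0)
        exact (add_le_add ih h2).trans_eq (Cardinal.add_eq_self hc0)
    have hre : (⋃ n, Qs n) = ⋃ n : ULift.{u} ℕ, Qs n.down := by
      ext x; simp only [mem_iUnion]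
      exact ⟨fun ⟨n, h⟩ => ⟨⟨n⟩, h⟩, fun ⟨n, h⟩ => ⟨n.down, h⟩⟩
    rw [hre]
    refine (Cardinal.mk_iUnion_le _).trans ?_
    have hsup : ⨆ n : ULift.{u} ℕ, #(Qs n.down) ≤ c := ciSup_le' fun n => hn n.down
    refine (mul_le_mul' Cardinal.mk_le_aleph0 hsup).trans ?_
    exact (mul_le_mul' hc0 le_rfl).trans_eq (Cardinal.mul_eq_self hc0)

lemma mk_finset_le' (β : Type u) : #(Finset β) ≤ max #β ℵ₀ := by
  by_cases hβ : Finite β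
  · exact le_max_of_le_right Cardinal.mk_le_aleph0
  · rw [not_finite_iff_infinite] at hβ
    exact le_max_of_le_left (Cardinal.mk_finset_of_infinite β).le

lemma mk_triple_le (ι : Type u) : #(ι × ℚ × ℚ) ≤ max #ι ℵ₀ := by
  have h1 : #(ι × ℚ × ℚ) = #ι * ℵ₀ := by
    rw [Cardinal.mk_prod]
    simp [Cardinal.mk_denumerable]
  rw [h1]
  rcases le_or_gt ℵ₀ #ι with h | h
  · rw [Cardinal.mul_eq_max h le_rfl]
  · calc #ι * ℵ₀ ≤ ℵ₀ * ℵ₀ := mul_le_mul' h.le le_rfl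
      _ = ℵ₀ := by simp
      _ ≤ _ := le_max_right _ _

lemma pi_dense_subset {ι : Type u} (S : Set (ι → ℝ)) :
    ∃ D ⊆ S, #D ≤ max #ι ℵ₀ ∧
      ∀ f ∈ S, ∀ U : Set (ι → ℝ), IsOpen U → f ∈ U → (D ∩ U).Nonempty := by
  classical
  set box : Finset (ι × ℚ × ℚ) → Set (ι → ℝ) :=
    fun F => {f | ∀ p ∈ F, ((p.2.1 : ℝ) < f p.1 ∧ f p.1 < (p.2.2 : ℝ))} with hbox
  set P : Set (Finset (ι × ℚ × ℚ)) := {F | (S ∩ box F).Nonempty} with hP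
  have g : ∀ F : P, (S ∩ box F.1).Nonempty := fun F => F.2
  set D : Set (ι → ℝ) := Set.range (fun F : P => (g F).some) with hD
  have hDS : D ⊆ S := by
    rintro x ⟨F, rfl⟩
    exact (g F).some_mem.1
  refine ⟨D, hDS, ?_, ?_⟩
  · calc #D ≤ #P := Cardinal.mk_range_le
      _ ≤ #(Finset (ι × ℚ × ℚ)) := Cardinal.mk_subtype_le _
      _ ≤ max #(ι × ℚ × ℚ) ℵ₀ := mk_finset_le' _
      _ ≤ max (max #ι ℵ₀) ℵ₀ := max_le_max_right _ (mk_triple_le ι)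
      _ = max #ι ℵ₀ := by rw [max_assoc, max_self]
  · intro f hfS U hU hfU
    obtain ⟨I, u, hu, hsub⟩ := isOpen_pi_iff.1 hU f hfU
    have hchoice : ∀ i ∈ I, ∃ q r : ℚ, (q : ℝ) < f i ∧ f i < (r : ℝ) ∧
        ∀ y : ℝ, (q : ℝ) < y → y < (r : ℝ) → y ∈ u i := by
      intro i hi
      obtain ⟨ε, hε, hball⟩ := Metric.isOpen_iff.1 (hu i hi).1 (f i) (hu i hi).2
      obtain ⟨q, hq1, hq2⟩ := exists_rat_btwn (show f i - ε < f i by linarith)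
      obtain ⟨r, hr1, hr2⟩ := exists_rat_btwn (show f i < f i + ε by linarith)
      refine ⟨q, r, hq2, hr1, fun y h1 h2 => hball ?_⟩
      rw [Metric.mem_ball, Real.dist_eq, abs_lt]
      constructor <;> linarith
    choose! q r hq hr hball using hchoice
    set F : Finset (ι × ℚ × ℚ) := I.image (fun i => (i, q i, r i)) with hF
    have hfbox : f ∈ box F := by
      intro p hp
      simp only [hF, Finset.mem_image] at hp
      obtain ⟨i, hi, rfl⟩ := hp
      exact ⟨hq i hi, hr i hi⟩
    have hFP : F ∈ P := ⟨f, hfS, hfbox⟩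
    set d := (g ⟨F, hFP⟩).some with hd
    have hdmem := (g ⟨F, hFP⟩).some_mem
    refine ⟨d, ⟨⟨F, hFP⟩, rfl⟩, hsub ?_⟩
    intro i hi
    have hpF : (i, q i, r i) ∈ F := Finset.mem_image_of_mem _ hi
    have := hdmem.2 _ hpF
    exact hball i hi (d i) this.1 this.2

set_option synthInstance.maxHeartbeats 1000000 in
set_option maxHeartbeats 1000000 in
lemma densChar_weakDual_le (X : Type u) [NormedAddCommGroup X] [NormedSpace ℝ X] [Nontrivial X] :
    densChar (WeakDual ℝ X) ≤ densChar X := by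
  classical
  obtain ⟨S, hSdense, hScard⟩ := exists_dense_densChar X
  set lam := densChar X with hlam
  have hXinf : Infinite X := by
    obtain ⟨x, hx⟩ := exists_ne (0 : X)
    exact infinite_of_module hx
  have hlaminf : ℵ₀ ≤ lam := aleph0_le_densChar X
  -- norming functionals
  have hnorm : ∀ s : X, s ≠ 0 → ∃ f : X →L[ℝ] ℝ, ‖f‖ = 1 ∧ f s = ‖s‖ := fun s hs =>
    exists_dual_vector ℝ s (norm_ne_zero_iff.2 hs)
  choose! φ hφ1 hφ2 using hnorm
  -- the key norming property
  have key : ∀ x : X, (∀ s ∈ S \ {0}, φ s x = 0) → x = 0 := by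
    intro x hx
    by_contra hx0
    have hxpos : 0 < ‖x‖ := norm_pos_iff.2 hx0
    obtain ⟨s, hs1, hs2⟩ := Metric.dense_iff.1 hSdense x (‖x‖ / 3) (by linarith)
    have hdist : ‖x - s‖ < ‖x‖ / 3 := by
      rw [← dist_eq_norm]; exact Metric.mem_ball'.1 hs1
    have hsnorm : 2 * (‖x‖ / 3) < ‖s‖ := by
      have := norm_sub_norm_le x (x - s)
      simp only [sub_sub_cancel] at this
      linarith
    have hsne : s ≠ 0 := by
      intro h; rw [h, norm_zero] at hsnorm; linarith
    have hzero : φ s x = 0 := hx s ⟨hs2, hsne⟩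
    have h3 : φ s (s - x) = ‖s‖ := by
      rw [map_sub, hzero, hφ2 s hsne, sub_zero]
    have hb : |φ s (s - x)| ≤ ‖s - x‖ := by
      have h1 := (φ s).le_opNorm (s - x)
      rw [hφ1 s hsne, one_mul] at h1
      exact (Real.norm_eq_abs _) ▸ h1
    have h5 : ‖s - x‖ = ‖x - s‖ := norm_sub_rev _ _
    have := (le_abs_self (φ s (s - x))).trans hb
    rw [h3, h5] at this
    linarith
  -- the generated rational span
  set F : Set (WeakDual ℝ X) := (fun s => (φ s : WeakDual ℝ X)) '' (S \ {0}) with hF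
  obtain ⟨G, hFG, hGop, hGcard⟩ := exists_genSet (ULift.{u} ℚ ⊕ PUnit.{u + 1})
    (fun i (a b : WeakDual ℝ X) => Sum.rec (fun q => (q.down : ℝ) • a) (fun _ => a + b) i)
    (F ∪ {0})
  have hG0 : (0 : WeakDual ℝ X) ∈ G := hFG (Or.inr rfl)
  have hGF : F ⊆ G := fun f hf => hFG (Or.inl hf)
  have hGadd : ∀ x ∈ G, ∀ y ∈ G, x + y ∈ G := fun x hx y hy =>
    hGop (Sum.inr PUnit.unit) x hx y hy
  have hGsmul : ∀ (q : ℚ), ∀ x ∈ G, (q : ℝ) • x ∈ G := fun q x hx =>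
    hGop (Sum.inl ⟨q⟩) x hx x hx
  -- cardinality of G
  have hGc : #G ≤ lam := by
    refine hGcard.trans ?_
    have h1 : #(F ∪ {0} : Set (WeakDual ℝ X)) ≤ lam := by
      refine (Cardinal.mk_union_le _ _).trans ?_
      have h2 : #F ≤ lam := by
        refine Cardinal.mk_image_le.trans ?_
        calc #(S \ {0} : Set X) ≤ #S := Cardinal.mk_le_mk_of_subset diff_subset
          _ = lam := hScard
      have h3 : #({0} : Set (WeakDual ℝ X)) ≤ lam := by
        rw [Cardinal.mk_singleton]
        exact le_trans Cardinal.one_le_aleph0 hlaminf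
      exact (add_le_add h2 h3).trans_eq (Cardinal.add_eq_self hlaminf)
    exact max_le h1 hlaminf
  -- density of G in the weak dual
  have hemb : IsEmbedding fun (h : WeakDual ℝ X) (y : X) => topDualPairing ℝ X h y :=
    WeakBilin.isEmbedding ContinuousLinearMap.coe_injective
  set ψ : WeakDual ℝ X → X → ℝ := fun h y => topDualPairing ℝ X h y with hψ
  have hGdense : Dense G := by
    intro g
    rw [hemb.toIsInducing.closure_eq_preimage_closure_image, mem_preimage]
    rw [mem_closure_iff]
    intro o ho hgo
    obtain ⟨I, v, hv, hsub⟩ := isOpen_pi_iff.1 ho (ψ g) hgo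
    rcases I.eq_empty_or_nonempty with hI | hI
    · refine ⟨ψ 0, hsub ?_, 0, hG0, rfl⟩
      intro i hi
      rw [hI] at hi
      exact absurd hi (Finset.notMem_empty i)
    -- choose radii
    have hball : ∀ i ∈ I, ∃ ε : ℝ, 0 < ε ∧ Metric.ball (ψ g i) ε ⊆ v i := by
      intro i hi
      obtain ⟨ε, hε, hb⟩ := Metric.isOpen_iff.1 (hv i hi).1 (ψ g i) (hv i hi).2
      exact ⟨ε, hε, hb⟩
    choose! ε hε hεball using hball
    set ε0 := (I.image ε).min' (hI.image ε) with hε0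
    have hε0pos : 0 < ε0 := by
      obtain ⟨i, hi, hieq⟩ := Finset.mem_image.1 ((I.image ε).min'_mem (hI.image ε))
      rw [hε0, ← hieq]
      exact hε i hi
    have hε0le : ∀ i ∈ I, ε0 ≤ ε i := fun i hi =>
      Finset.min'_le _ _ (Finset.mem_image_of_mem ε hi)
    -- the finite-dimensional argument
    set R : WeakDual ℝ X →ₗ[ℝ] (↥I → ℝ) :=
      { toFun := fun h => fun i => h i.1
        map_add' := fun a b => rfl
        map_smul' := fun c a => rfl } with hR
    set W : Submodule ℝ (↥I → ℝ) := (Submodule.span ℝ F).map R with hW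
    have hvW : R g ∈ W := by
      by_contra hvmem
      obtain ⟨ξ, t0, hξ1, hξ2⟩ :=
        geometric_hahn_banach_point_closed W.convex
          (Submodule.closed_of_finiteDimensional W) hvmem
      have ht0neg : t0 < 0 := by
        have := hξ2 0 W.zero_mem
        rw [map_zero] at this
        linarith
      have hξW : ∀ b ∈ W, ξ b = 0 := by
        intro b hb
        by_contra hbne
        have hmem : ((t0 - 1) / ξ b) • b ∈ W := W.smul_mem _ hb
        have := hξ2 _ hmem
        rw [map_smul] at this
        simp only [smul_eq_mul] at this
        rw [div_mul_cancel₀ _ hbne] at this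
        linarith
      -- build the point x0
      set e : ↥I → (↥I → ℝ) := fun i => fun j => if i = j then 1 else 0 with he
      set x0 : X := ∑ i : ↥I, ξ (e i) • (i.1 : X) with hx0
      have hRx : ∀ h : WeakDual ℝ X, ξ (R h) = h x0 := by
        intro h
        have h1 : R h = ∑ i : ↥I, R h i • e i := pi_eq_sum_univ (R h)
        rw [h1, map_sum]
        simp only [map_smul, smul_eq_mul]
        rw [hx0, map_sum]
        refine Finset.sum_congr rfl fun i _ => ?_
        have : h (ξ (e i) • (i.1 : X)) = ξ (e i) * h i.1 := by
          rw [map_smul]; rfl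
        rw [this]
        have : R h i = h i.1 := rfl
        rw [this, mul_comm]
      have hx00 : x0 = 0 := by
        refine key x0 fun s hs => ?_
        have hmem : R ((φ s : WeakDual ℝ X)) ∈ W :=
          ⟨(φ s : WeakDual ℝ X), Submodule.subset_span ⟨s, hs, rfl⟩, rfl⟩
        have := hξW _ hmem
        rw [hRx (φ s : WeakDual ℝ X)] at this
        exact this
      have : ξ (R g) = 0 := by
        rw [hRx g, hx00, map_zero]
      linarith
    obtain ⟨h, hhspan, hRh⟩ := hvW
    have hhspan' : h ∈ Submodule.span ℝ F := hhspan
    rw [Submodule.mem_span_set'] at hhspan'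
    obtain ⟨m, cf, ff, hsum⟩ := hhspan'
    -- rationalize the coefficients
    have hBpos : ∀ j : Fin m, (0:ℝ) < 1 + ∑ i : ↥I, |(ff j : WeakDual ℝ X) i.1| := by
      intro j
      have : (0:ℝ) ≤ ∑ i : ↥I, |(ff j : WeakDual ℝ X) i.1| :=
        Finset.sum_nonneg fun i _ => abs_nonneg _
      linarith
    have hq : ∀ j : Fin m, ∃ q : ℚ, |cf j - q| <
        (ε0 / (m + 1)) / (1 + ∑ i : ↥I, |(ff j : WeakDual ℝ X) i.1|) := by
      intro j
      refine exists_rat_near _ ?_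
      exact div_pos (div_pos hε0pos (by positivity)) (hBpos j)
    choose qf hqf using hq
    set h' : WeakDual ℝ X := ∑ j : Fin m, (qf j : ℝ) • (ff j : WeakDual ℝ X) with hh'
    have hh'G : h' ∈ G := by
      rw [hh']
      refine Finset.sum_induction _ (· ∈ G) (fun a b ha hb => hGadd a ha b hb) hG0 fun j _ => ?_
      refine hGsmul (qf j) _ ?_
      exact hGF (ff j).2
    -- the estimate
    refine ⟨ψ h', hsub ?_, h', hh'G, rfl⟩
    intro i hi
    refine hεball i hi ?_
    rw [Metric.mem_ball]
    have hgi : ψ g i = (h : WeakDual ℝ X) i := by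
      have : R h ⟨i, hi⟩ = R g ⟨i, hi⟩ := by rw [hRh]
      exact this.symm
    have hdiff : ψ h' i - ψ g i = ∑ j : Fin m, ((qf j : ℝ) - cf j) * (ff j : WeakDual ℝ X) i := by
      rw [hgi]
      have h1 : ψ h' i = ∑ j : Fin m, (qf j : ℝ) * (ff j : WeakDual ℝ X) i := by
        rw [hh']
        show (∑ j : Fin m, (qf j : ℝ) • (ff j : WeakDual ℝ X)) i = _
        refine (ContinuousLinearMap.sum_apply (F := X →L[ℝ] ℝ) _ _ i).trans ?_
        refine Finset.sum_congr rfl fun j _ => rfl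
      have h2 : (h : WeakDual ℝ X) i = ∑ j : Fin m, cf j * (ff j : WeakDual ℝ X) i := by
        rw [← hsum]
        show (∑ j : Fin m, cf j • (ff j : WeakDual ℝ X)) i = _
        refine (ContinuousLinearMap.sum_apply (F := X →L[ℝ] ℝ) _ _ i).trans ?_
        refine Finset.sum_congr rfl fun j _ => rfl
      rw [h1]
      show _ - (h : WeakDual ℝ X) i = _
      rw [h2, ← Finset.sum_sub_distrib]
      refine Finset.sum_congr rfl fun j _ => by ring
    rw [Real.dist_eq, hdiff]
    have hbound : ∀ j : Fin m, |((qf j : ℝ) - cf j) * (ff j : WeakDual ℝ X) i| ≤ ε0 / (m + 1) := by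
      intro j
      rw [abs_mul]
      have h1 : |(qf j : ℝ) - cf j| ≤
          (ε0 / (m + 1)) / (1 + ∑ i' : ↥I, |(ff j : WeakDual ℝ X) i'.1|) := by
        rw [abs_sub_comm]
        exact (hqf j).le
      have h2 : |(ff j : WeakDual ℝ X) i| ≤ 1 + ∑ i' : ↥I, |(ff j : WeakDual ℝ X) i'.1| := by
        have : |(ff j : WeakDual ℝ X) i| ≤ ∑ i' : ↥I, |(ff j : WeakDual ℝ X) i'.1| := by
          refine Finset.single_le_sum (f := fun i' : ↥I => |(ff j : WeakDual ℝ X) i'.1|)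
            (fun i' _ => abs_nonneg _) (Finset.mem_univ ⟨i, hi⟩)
        linarith
      calc |(qf j : ℝ) - cf j| * |(ff j : WeakDual ℝ X) i|
          ≤ ((ε0 / (m + 1)) / (1 + ∑ i' : ↥I, |(ff j : WeakDual ℝ X) i'.1|)) *
            (1 + ∑ i' : ↥I, |(ff j : WeakDual ℝ X) i'.1|) := by
            refine mul_le_mul h1 h2 (abs_nonneg _) ?_
            positivity
        _ = ε0 / (m + 1) := div_mul_cancel₀ _ (hBpos j).ne'
    calc |∑ j : Fin m, ((qf j : ℝ) - cf j) * (ff j : WeakDual ℝ X) i|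
        ≤ ∑ j : Fin m, |((qf j : ℝ) - cf j) * (ff j : WeakDual ℝ X) i| :=
          Finset.abs_sum_le_sum_abs _ _
      _ ≤ ∑ _j : Fin m, ε0 / (m + 1) := Finset.sum_le_sum fun j _ => hbound j
      _ = m * (ε0 / (m + 1)) := by rw [Finset.sum_const, Finset.card_univ, Fintype.card_fin,
          nsmul_eq_mul]
      _ < ε0 := by
          rw [mul_div_assoc']  -- m * ε0 / (m+1) < ε0
          rw [div_lt_iff₀ (by positivity)]
          nlinarith [hε0pos]
      _ ≤ ε i := hε0le i hi
  exact (densChar_le hGdense).trans hGc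

set_option maxHeartbeats 1000000 in
set_option synthInstance.maxHeartbeats 1000000 in
lemma densChar_le_weakDual (X : Type u) [NormedAddCommGroup X] [Lattice X] [IsOrderedAddMonoid X]
    [HasSolidNorm X] [NormedSpace ℝ X]
    [Nontrivial X]
    (h : ∃ K : Set X, WeaklyCompact K ∧ sublatticeGen K = Set.univ) :
    densChar X ≤ densChar (WeakDual ℝ X) := by
  classical
  obtain ⟨K, hKcomp, hKgen⟩ := h
  set κ := densChar (WeakDual ℝ X) with hκ
  -- the weak dual is infinite
  obtain ⟨x₀, hx₀⟩ := exists_ne (0 : X)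
  obtain ⟨g₀, hg₀norm, hg₀x⟩ := exists_dual_vector ℝ x₀ (norm_ne_zero_iff.2 hx₀)
  have hg₀x0 : g₀ x₀ ≠ 0 := by
    rw [hg₀x]
    exact_mod_cast norm_ne_zero_iff.2 hx₀
  have hWinf : Infinite (WeakDual ℝ X) := by
    refine Infinite.of_injective (fun t : ℝ => t • (g₀ : WeakDual ℝ X)) fun a b hab => ?_
    have : a * g₀ x₀ = b * g₀ x₀ := congrFun (congrArg DFunLike.coe hab) x₀
    exact mul_right_cancel₀ hg₀x0 this
  have hκinf : ℵ₀ ≤ κ := aleph0_le_densChar _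
  obtain ⟨Dw, hDwdense, hDwcard⟩ := exists_dense_densChar (WeakDual ℝ X)
  -- Dw separates points of X
  have hsep : ∀ x y : X, (∀ f ∈ Dw, f x = f y) → x = y := by
    intro x y hxy
    have hclosed : IsClosed {f : WeakDual ℝ X | f x = f y} :=
      isClosed_eq (WeakBilin.eval_continuous _ x) (WeakBilin.eval_continuous _ y)
    have hall : ∀ f : WeakDual ℝ X, f x = f y := by
      intro f
      have : (univ : Set (WeakDual ℝ X)) ⊆ {f : WeakDual ℝ X | f x = f y} := by
        rw [← hDwdense.closure_eq]
        exact closure_minimal (fun f hf => hxy f hf) hclosed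
      exact this (mem_univ f)
    exact (NormedSpace.eq_iff_forall_dual_eq ℝ).2 fun g => hall (g : WeakDual ℝ X)
  -- the compact image
  set KW : Set (WeakSpace ℝ X) := toWeakSpace ℝ X '' K with hKW
  have hKWc : IsCompact KW := hKcomp
  -- the evaluation map into a product
  set Φ : WeakSpace ℝ X → (↥Dw → ℝ) :=
    fun y f => (f.1 : WeakDual ℝ X) ((toWeakSpace ℝ X).symm y) with hΦ
  have hΦcont : Continuous Φ := by
    refine continuous_pi fun f => ?_
    exact WeakBilin.eval_continuous ((topDualPairing ℝ X).flip) f.1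
  have hΦinj : Function.Injective Φ := by
    intro y₁ y₂ heq
    have : (toWeakSpace ℝ X).symm y₁ = (toWeakSpace ℝ X).symm y₂ :=
      hsep _ _ fun f hf => congrFun heq ⟨f, hf⟩
    exact (toWeakSpace ℝ X).symm.injective this
  -- dense subset of the image
  obtain ⟨D', hD'sub, hD'card, hD'dense⟩ := pi_dense_subset (Φ '' KW)
  set D : Set (WeakSpace ℝ X) := KW ∩ Φ ⁻¹' D' with hD
  have hDcard : #D ≤ #D' := by
    rw [← Cardinal.mk_image_eq (f := Φ) (s := D) hΦinj]
    refine Cardinal.mk_le_mk_of_subset ?_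
    rintro _ ⟨d, hd, rfl⟩
    exact hd.2
  have hDdense : ∀ y ∈ KW, ∀ U : Set (WeakSpace ℝ X), IsOpen U → y ∈ U → ∃ d ∈ D, d ∈ U := by
    intro y hy U hU hyU
    set V : Set (↥Dw → ℝ) := (Φ '' (KW \ U))ᶜ with hV
    have hVopen : IsOpen V := (((hKWc.diff hU).image hΦcont).isClosed).isOpen_compl
    have hyV : Φ y ∈ V := by
      rintro ⟨z, hz, heq⟩
      exact hz.2 (hΦinj heq ▸ hyU)
    obtain ⟨w, hwD', hwV⟩ := hD'dense (Φ y) ⟨y, hy, rfl⟩ V hVopen hyV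
    obtain ⟨d, hdKW, rfl⟩ := hD'sub hwD'
    refine ⟨d, ⟨hdKW, hwD'⟩, ?_⟩
    by_contra hdU
    exact hwV ⟨d, ⟨hdKW, hdU⟩, rfl⟩
  -- pull back to X
  set D₀ : Set X := (toWeakSpace ℝ X).symm '' D with hD₀
  have hD₀K : D₀ ⊆ K := by
    rintro _ ⟨d, hd, rfl⟩
    obtain ⟨k, hk, rfl⟩ := hd.1
    rwa [LinearEquiv.symm_apply_apply]
  -- generate the rational sublattice
  obtain ⟨Q, hQbase, hQop, hQcard⟩ := exists_genSet (ULift.{u} ℚ ⊕ ULift.{u} (Fin 3))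
    (fun i (a b : X) => Sum.rec (fun q => (q.down : ℝ) • a)
      (fun j => if j.down = 0 then a + b else if j.down = 1 then a ⊔ b else a ⊓ b) i)
    (D₀ ∪ {0})
  have hQ0 : (0 : X) ∈ Q := hQbase (Or.inr rfl)
  have hQD₀ : D₀ ⊆ Q := fun d hd => hQbase (Or.inl hd)
  have hQadd : ∀ x ∈ Q, ∀ y ∈ Q, x + y ∈ Q := fun x hx y hy => by
    simpa using hQop (Sum.inr ⟨0⟩) x hx y hy
  have hQsup : ∀ x ∈ Q, ∀ y ∈ Q, x ⊔ y ∈ Q := fun x hx y hy => by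
    simpa using hQop (Sum.inr ⟨1⟩) x hx y hy
  have hQinf : ∀ x ∈ Q, ∀ y ∈ Q, x ⊓ y ∈ Q := fun x hx y hy => by
    simpa using hQop (Sum.inr ⟨2⟩) x hx y hy
  have hQsmul : ∀ (q : ℚ), ∀ x ∈ Q, (q : ℝ) • x ∈ Q := fun q x hx =>
    hQop (Sum.inl ⟨q⟩) x hx x hx
  -- the closure of Q
  set C : Set X := closure Q with hC
  have hCadd : ∀ x ∈ C, ∀ y ∈ C, x + y ∈ C := fun x hx y hy =>
    map_mem_closure₂ continuous_add hx hy hQadd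
  have hCsmul : ∀ (c : ℝ), ∀ x ∈ C, c • x ∈ C := by
    intro c x hx
    have hc : c ∈ closure (Set.range (fun q : ℚ => (q : ℝ))) := by
      rw [Rat.denseRange_cast.closure_eq]; trivial
    refine map_mem_closure₂ continuous_smul hc hx ?_
    rintro _ ⟨q, rfl⟩ b hb
    exact hQsmul q b hb
  have hCsup : ∀ x ∈ C, ∀ y ∈ C, x ⊔ y ∈ C := fun x hx y hy =>
    map_mem_closure₂ continuous_sup hx hy hQsup
  have hCinf : ∀ x ∈ C, ∀ y ∈ C, x ⊓ y ∈ C := fun x hx y hy =>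
    map_mem_closure₂ continuous_inf hx hy hQinf
  have hCconv : Convex ℝ C := by
    intro x hx y hy a b _ _ _
    exact hCadd _ (hCsmul a x hx) _ (hCsmul b y hy)
  -- K is contained in C
  have hKC : K ⊆ C := by
    intro x hx
    by_contra hxC
    obtain ⟨f, u, hfx, hfC⟩ := geometric_hahn_banach_point_closed hCconv isClosed_closure hxC
    set U : Set (WeakSpace ℝ X) := {y | f ((toWeakSpace ℝ X).symm y) < u} with hU
    have hUopen : IsOpen U := by
      have : Continuous fun y : WeakSpace ℝ X => f ((toWeakSpace ℝ X).symm y) :=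
        WeakBilin.eval_continuous ((topDualPairing ℝ X).flip) f
      exact isOpen_lt this continuous_const
    obtain ⟨d, hdD, hdU⟩ := hDdense (toWeakSpace ℝ X x) ⟨x, hx, rfl⟩ U hUopen hfx
    have hd₀C : (toWeakSpace ℝ X).symm d ∈ C := subset_closure (hQD₀ ⟨d, hdD, rfl⟩)
    have := hfC _ hd₀C
    have h2 : f ((toWeakSpace ℝ X).symm d) < u := hdU
    linarith
  -- C is everything, so Q is dense
  have hCsub : IsClosedSublattice C ∧ K ⊆ C :=
    ⟨⟨isClosed_closure, subset_closure hQ0, hCadd, hCsmul, hCsup, hCinf⟩, hKC⟩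
  have hCuniv : C = Set.univ := by
    refine eq_univ_of_univ_subset ?_
    rw [← hKgen]
    exact sInter_subset_of_mem hCsub
  have hQdense : Dense Q := by
    rw [dense_iff_closure_eq]
    exact hCuniv
  -- cardinality chain
  refine (densChar_le hQdense).trans ?_
  refine hQcard.trans ?_
  have hbase : #(D₀ ∪ {0} : Set X) ≤ κ := by
    refine (Cardinal.mk_union_le _ _).trans ?_
    have h1 : #D₀ ≤ κ := by
      refine (Cardinal.mk_image_le).trans <| hDcard.trans <| hD'card.trans ?_
      rw [hDwcard]
      exact max_le le_rfl hκinf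
    have h2 : #({0} : Set X) ≤ κ := by
      rw [Cardinal.mk_singleton]
      exact le_trans Cardinal.one_le_aleph0 hκinf
    exact (add_le_add h1 h2).trans_eq (Cardinal.add_eq_self hκinf)
  exact max_le hbase hκinf

end DensCharHelpers

/-- if X is LWCG then dens(X) = dens(X*, w*). -/
theorem densChar_eq_of_LWCG
    {X : Type*} [NormedAddCommGroup X] [Lattice X] [IsOrderedAddMonoid X] [HasSolidNorm X]
    [NormedSpace ℝ X] [CompleteSpace X]
    (h : ∃ K : Set X, WeaklyCompact K ∧ sublatticeGen K = Set.univ) :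
    densChar X = densChar (WeakDual ℝ X) := by
  rcases subsingleton_or_nontrivial X with hX | hX
  · haveI : Nonempty X := ⟨0⟩
    haveI : Subsingleton (WeakDual ℝ X) :=
      ⟨fun f g => DFunLike.ext f g fun x => by
        rw [Subsingleton.elim x (0 : X), map_zero, map_zero]⟩
    rw [densChar_subsingleton X, densChar_subsingleton (WeakDual ℝ X)]
  · exact le_antisymm (densChar_le_weakDual X h) (densChar_weakDual_le X)
end

section
/- Let X be a Banach lattice whose dual X* is w*-separable. Then X is LWCG if and only if X is separable. -/
open Filter Topology Set

section LatSpan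

variable {E : Type*} [NormedAddCommGroup E] [Lattice E] [NormedSpace ℝ E]

/-- One step of closing under lattice/linear operations. -/
def latStep (B : Set E) : Set E :=
  B ∪ Set.image2 (· + ·) B B ∪ (⋃ q : ℚ, ((q : ℝ) • ·) '' B) ∪
    Set.image2 (· ⊔ ·) B B ∪ Set.image2 (· ⊓ ·) B B

def latIter (A : Set E) : ℕ → Set E
  | 0 => insert 0 A
  | n + 1 => latStep (latIter A n)

def latSpan (A : Set E) : Set E := ⋃ n, latIter A n

lemma subset_latStep (B : Set E) : B ⊆ latStep B := fun x hx =>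
  Or.inl (Or.inl (Or.inl (Or.inl hx)))

lemma latIter_mono_succ (A : Set E) (n : ℕ) : latIter A n ⊆ latIter A (n + 1) :=
  subset_latStep _

lemma latIter_mono (A : Set E) {m n : ℕ} (h : m ≤ n) : latIter A m ⊆ latIter A n := by
  induction h with
  | refl => exact subset_rfl
  | step _ ih => exact ih.trans (latIter_mono_succ A _)

lemma latIter_countable {A : Set E} (hA : A.Countable) (n : ℕ) : (latIter A n).Countable := by
  induction n with
  | zero => exact (hA.insert 0)
  | succ n ih =>
    refine (((((ih.union (ih.image2 ih _)).union ?_).union (ih.image2 ih _)).union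
      (ih.image2 ih _)))
    exact Set.countable_iUnion fun q => ih.image _

lemma latSpan_countable {A : Set E} (hA : A.Countable) : (latSpan A).Countable :=
  Set.countable_iUnion (latIter_countable hA)

lemma subset_latSpan (A : Set E) : A ⊆ latSpan A := fun x hx =>
  Set.mem_iUnion.2 ⟨0, Or.inr hx⟩

lemma zero_mem_latSpan (A : Set E) : (0 : E) ∈ latSpan A :=
  Set.mem_iUnion.2 ⟨0, Or.inl rfl⟩

lemma latSpan_binop {A : Set E} {x y : E} (hx : x ∈ latSpan A) (hy : y ∈ latSpan A)
    {op : E → E → E}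
    (hmem : ∀ (B : Set E) (a b : E), a ∈ B → b ∈ B → op a b ∈ latStep B) :
    op x y ∈ latSpan A := by
  obtain ⟨m, hm⟩ := Set.mem_iUnion.1 hx
  obtain ⟨n, hn⟩ := Set.mem_iUnion.1 hy
  refine Set.mem_iUnion.2 ⟨max m n + 1, ?_⟩
  exact hmem _ _ _ (latIter_mono A (le_max_left m n) hm) (latIter_mono A (le_max_right m n) hn)

lemma latSpan_add {A : Set E} {x y : E} (hx : x ∈ latSpan A) (hy : y ∈ latSpan A) :
    x + y ∈ latSpan A :=
  latSpan_binop hx hy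
    (fun B a b ha hb => Or.inl (Or.inl (Or.inl (Or.inr (Set.mem_image2_of_mem ha hb)))))

lemma latSpan_sup {A : Set E} {x y : E} (hx : x ∈ latSpan A) (hy : y ∈ latSpan A) :
    x ⊔ y ∈ latSpan A :=
  latSpan_binop hx hy
    (fun B a b ha hb => Or.inl (Or.inr (Set.mem_image2_of_mem ha hb)))

lemma latSpan_inf {A : Set E} {x y : E} (hx : x ∈ latSpan A) (hy : y ∈ latSpan A) :
    x ⊓ y ∈ latSpan A :=
  latSpan_binop hx hy
    (fun B a b ha hb => Or.inr (Set.mem_image2_of_mem ha hb))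

lemma latSpan_ratsmul {A : Set E} {x : E} (q : ℚ) (hx : x ∈ latSpan A) :
    (q : ℝ) • x ∈ latSpan A := by
  obtain ⟨m, hm⟩ := Set.mem_iUnion.1 hx
  exact Set.mem_iUnion.2 ⟨m + 1,
    Or.inl (Or.inl (Or.inr (Set.mem_iUnion.2 ⟨q, Set.mem_image_of_mem _ hm⟩)))⟩

end LatSpan

section Closure

variable {E : Type*} [NormedAddCommGroup E] [Lattice E] [HasSolidNorm E] [IsOrderedAddMonoid E] [NormedSpace ℝ E]

lemma closure_binop {T : Set E} {op : E × E → E} (hc : Continuous op)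
    (hT : ∀ x ∈ T, ∀ y ∈ T, op (x, y) ∈ T) {x y : E}
    (hx : x ∈ closure T) (hy : y ∈ closure T) : op (x, y) ∈ closure T := by
  have hmt : Set.MapsTo op (T ×ˢ T) T := fun p hp => hT _ hp.1 _ hp.2
  have := (hmt.closure hc) (show (x, y) ∈ closure (T ×ˢ T) by
    rw [closure_prod_eq]; exact ⟨hx, hy⟩)
  exact this

lemma closure_latSpan_smul {A : Set E} (c : ℝ) {x : E} (hx : x ∈ closure (latSpan A)) :
    c • x ∈ closure (latSpan A) := by
  rw [mem_closure_iff_seq_limit] at hx ⊢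
  obtain ⟨t, ht, htlim⟩ := hx
  have hq : ∀ k : ℕ, ∃ q : ℚ, |c - (q : ℝ)| < 1 / (k + 1) := fun k =>
    exists_rat_near c (by positivity)
  choose q hq using hq
  have hqlim : Tendsto (fun k => (q k : ℝ)) atTop (𝓝 c) := by
    have h0 : Tendsto (fun k : ℕ => (1 : ℝ) / (k + 1)) atTop (𝓝 0) :=
      tendsto_one_div_add_atTop_nhds_zero_nat
    have : Tendsto (fun k => c - (q k : ℝ)) atTop (𝓝 0) :=
      squeeze_zero_norm (fun k => (hq k).le) h0
    have := Tendsto.sub (tendsto_const_nhds (x := c)) this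
    simpa using this
  refine ⟨fun k => (q k : ℝ) • t k, fun k => latSpan_ratsmul _ (ht k), ?_⟩
  simpa using hqlim.smul htlim

lemma isClosedSublattice_closure_latSpan (A : Set E) :
    IsClosedSublattice (closure (latSpan A)) := by
  refine ⟨isClosed_closure, subset_closure (zero_mem_latSpan A), ?_, ?_, ?_, ?_⟩
  · exact fun x hx y hy => closure_binop (continuous_add)
      (fun a ha b hb => latSpan_add ha hb) hx hy
  · exact fun c x hx => closure_latSpan_smul c hx
  · exact fun x hx y hy => closure_binop (continuous_sup)
      (fun a ha b hb => latSpan_sup ha hb) hx hy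
  · exact fun x hx y hy => closure_binop (continuous_inf)
      (fun a ha b hb => latSpan_inf ha hb) hx hy

lemma convex_closure_latSpan (A : Set E) : Convex ℝ (closure (latSpan A)) := by
  obtain ⟨-, h0, hadd, hsmul, -, -⟩ := isClosedSublattice_closure_latSpan A
  intro x hx y hy a b _ _ _
  exact hadd _ (hsmul a x hx) _ (hsmul b y hy)

end Closure


section Directions

variable {X : Type*} [NormedAddCommGroup X] [Lattice X] [HasSolidNorm X] [IsOrderedAddMonoid X] [NormedSpace ℝ X]

lemma lwcg_of_separable [TopologicalSpace.SeparableSpace X] :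
    ∃ K : Set X, WeaklyCompact K ∧ sublatticeGen K = Set.univ := by
  obtain ⟨u, hu⟩ : ∃ u : ℕ → X, DenseRange u :=
    ⟨TopologicalSpace.denseSeq X, TopologicalSpace.denseRange_denseSeq X⟩
  set c : ℕ → ℝ := fun n => 2 ^ n * (1 + ‖u n‖) with hc
  have hcpos : ∀ n, 0 < c n := fun n => by positivity
  set v : ℕ → X := fun n => (c n)⁻¹ • u n with hv
  have hvlim : Tendsto v atTop (𝓝 0) := by
    apply squeeze_zero_norm (a := fun n => ((2 : ℝ) ^ n)⁻¹)
    · intro n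
      have h1 : (1 + ‖u n‖)⁻¹ * ‖u n‖ ≤ 1 := by
        rw [inv_mul_le_iff₀ (by positivity)]
        linarith [norm_nonneg (u n)]
      have h2 : (0 : ℝ) < 2 ^ n := by positivity
      calc ‖v n‖ = ((2 : ℝ) ^ n)⁻¹ * ((1 + ‖u n‖)⁻¹ * ‖u n‖) := by
            rw [hv]; simp only [norm_smul, norm_inv, Real.norm_eq_abs, hc, mul_inv]
            rw [abs_of_pos (by positivity), mul_assoc]
        _ ≤ ((2 : ℝ) ^ n)⁻¹ * 1 := by
            exact mul_le_mul_of_nonneg_left h1 (by positivity)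
        _ = ((2 : ℝ) ^ n)⁻¹ := mul_one _
    · simpa only [← inv_pow] using
        tendsto_pow_atTop_nhds_zero_of_lt_one (by norm_num : (0:ℝ) ≤ 2⁻¹) (by norm_num)
  refine ⟨insert 0 (Set.range v), ?_, ?_⟩
  · have hcomp : IsCompact (insert (0 : X) (Set.range v)) := hvlim.isCompact_insert_range
    have hco : Continuous (toWeakSpace ℝ X) := by
      have : ⇑(toWeakSpace ℝ X) = ⇑(toWeakSpaceCLM ℝ X) :=
        funext fun x => (toWeakSpaceCLM_eq_toWeakSpace ℝ X x).symm
      rw [this]; exact (toWeakSpaceCLM ℝ X).continuous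
    exact hcomp.image hco
  · refine Set.eq_univ_iff_forall.2 fun x => ?_
    rw [sublatticeGen, Set.mem_sInter]
    rintro S ⟨⟨hSclosed, h0, hadd, hsmul, hsup, hinf⟩, hKS⟩
    have hrange : Set.range u ⊆ S := by
      rintro - ⟨n, rfl⟩
      have hvS : v n ∈ S := hKS (Set.mem_insert_of_mem _ ⟨n, rfl⟩)
      have := hsmul (c n) _ hvS
      rwa [hv, smul_inv_smul₀ (hcpos n).ne'] at this
    exact closure_minimal hrange hSclosed (hu x)

lemma separable_of_lwcg [CompleteSpace X]
    (hsep : TopologicalSpace.SeparableSpace (WeakDual ℝ X))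
    (K : Set X) (hKc : WeaklyCompact K) (hKgen : sublatticeGen K = Set.univ) :
    TopologicalSpace.SeparableSpace X := by
  -- a separating sequence of functionals
  obtain ⟨s, hscount, hsdense⟩ := TopologicalSpace.exists_countable_dense (WeakDual ℝ X)
  obtain ⟨f, hfs⟩ := hscount.exists_eq_range hsdense.nonempty
  have hfsep : ∀ x : X, x ≠ 0 → ∃ n, f n x ≠ 0 := by
    intro x hx
    obtain ⟨g, hg1, hgx⟩ := exists_dual_vector ℝ x (norm_ne_zero_iff.2 hx)
    have hopen : IsOpen {h : WeakDual ℝ X | h x ≠ 0} := by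
      have hev : Continuous fun h : WeakDual ℝ X => h x := WeakDual.eval_continuous x
      exact (isOpen_compl_singleton (x := (0:ℝ))).preimage hev
    have hne : {h : WeakDual ℝ X | h x ≠ 0}.Nonempty := by
      refine ⟨StrongDual.toWeakDual g, ?_⟩
      have : (StrongDual.toWeakDual g) x = g x := rfl
      rw [Set.mem_setOf_eq, this, hgx]
      exact norm_ne_zero_iff.2 hx
    obtain ⟨h, hhU, hhs⟩ := hsdense.inter_open_nonempty _ hopen hne
    rw [hfs] at hhs
    obtain ⟨n, rfl⟩ := hhs
    exact ⟨n, hhU⟩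
  -- the coordinate map into `ℕ → ℝ`
  set Φ : WeakSpace ℝ X → (ℕ → ℝ) := fun z n => f n ((toWeakSpace ℝ X).symm z) with hΦ
  have hΦc : Continuous Φ := by
    refine continuous_pi fun n => ?_
    exact WeakBilin.eval_continuous ((topDualPairing ℝ X).flip) (f n)
  have hΦinj : Function.Injective Φ := by
    intro a b hab
    have hab' : (toWeakSpace ℝ X).symm a = (toWeakSpace ℝ X).symm b := by
      by_contra hne
      have hx : (toWeakSpace ℝ X).symm a - (toWeakSpace ℝ X).symm b ≠ 0 := sub_ne_zero.2 hne
      obtain ⟨n, hn⟩ := hfsep _ hx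
      apply hn
      have h1 := congrFun hab n
      simp only [hΦ] at h1
      rw [map_sub, h1, sub_self]
    exact (toWeakSpace ℝ X).symm.injective hab'
  set K' : Set (WeakSpace ℝ X) := toWeakSpace ℝ X '' K with hK'
  have hK'c : IsCompact K' := hKc
  haveI : CompactSpace K' := isCompact_iff_compactSpace.1 hK'c
  haveI : SecondCountableTopology K' :=
    ((hΦc.comp continuous_subtype_val).isClosedEmbedding
      (hΦinj.comp Subtype.val_injective)).toIsEmbedding.secondCountableTopology
  obtain ⟨D₀, hD₀c, hD₀d⟩ := TopologicalSpace.exists_countable_dense K'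
  set D : Set X := (toWeakSpace ℝ X).symm '' (Subtype.val '' D₀) with hD
  have hDc : D.Countable := (hD₀c.image _).image _
  set S : Set X := closure (latSpan D) with hS
  have hDS : D ⊆ S := (subset_latSpan D).trans subset_closure
  have hSclosedW : closure (toWeakSpace ℝ X '' S) = toWeakSpace ℝ X '' S := by
    have h1 := (convex_closure_latSpan D).toWeakSpace_closure (𝕜 := ℝ)
    rw [closure_closure] at h1
    exact h1.symm
  have hKS : K ⊆ S := by
    intro x hx
    have hx' : toWeakSpace ℝ X x ∈ K' := Set.mem_image_of_mem _ hx
    have h2 : (⟨_, hx'⟩ : K') ∈ closure D₀ := hD₀d _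
    have h3 : toWeakSpace ℝ X x ∈ closure (Subtype.val '' D₀) :=
      image_closure_subset_closure_image continuous_subtype_val
        (Set.mem_image_of_mem _ h2)
    have h4 : Subtype.val '' D₀ ⊆ toWeakSpace ℝ X '' S := by
      intro z hz
      refine ⟨(toWeakSpace ℝ X).symm z, hDS ⟨z, hz, rfl⟩, ?_⟩
      simp
    have h5 : toWeakSpace ℝ X x ∈ toWeakSpace ℝ X '' S := by
      rw [← hSclosedW]; exact closure_mono h4 h3
    obtain ⟨y, hyS, hy⟩ := h5
    rwa [← (toWeakSpace ℝ X).injective hy]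
  have hSsub : sublatticeGen K ⊆ S :=
    Set.sInter_subset_of_mem ⟨isClosedSublattice_closure_latSpan D, hKS⟩
  rw [hKgen] at hSsub
  have hdense : Dense (latSpan D) := by
    rw [dense_iff_closure_eq]
    exact Set.eq_univ_of_univ_subset hSsub
  exact ⟨⟨latSpan D, latSpan_countable hDc, hdense⟩⟩

end Directions


/-- if X* is w*-separable, then X is LWCG iff X is separable. -/
theorem LWCG_iff_separable_of_wstar_separable_dual
    {X : Type*} [NormedAddCommGroup X] [Lattice X] [HasSolidNorm X] [IsOrderedAddMonoid X] [NormedSpace ℝ X] [CompleteSpace X]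
    (hsep : TopologicalSpace.SeparableSpace (WeakDual ℝ X)) :
    (∃ K : Set X, WeaklyCompact K ∧ sublatticeGen K = Set.univ) ↔
      TopologicalSpace.SeparableSpace X := by
  constructor
  · rintro ⟨K, hKc, hKgen⟩
    exact separable_of_lwcg hsep K hKc hKgen
  · intro h
    exact lwcg_of_separable
end

section
/- For 1 < p < ∞, the weak-Lp space L_{p,∞}[0,1] has no quasi-interior point. -/
open Filter Topology Set MeasureTheory ENNReal

/-- The weak-Lp quasinorm of a function on [0,1]:
‖f‖_{p,∞} = sup_{t>0} t · λ({|f| > t})^{1/p}, valued in ℝ≥0∞. -/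
noncomputable def wLpNorm (p : ℝ) (f : ℝ → ℝ) : ℝ≥0∞ :=
  ⨆ t : {t : ℝ // 0 < t},
    ENNReal.ofReal t.1 *
      ((volume.restrict (Set.Icc (0 : ℝ) 1)) {x | t.1 < |f x|}) ^ (1 / p)

lemma aux_subset_measure (A : Set ℝ) (hA : MeasurableSet A) {r : ℝ≥0∞}
    (hr : r ≤ (volume.restrict (Set.Icc (0:ℝ) 1)) A) :
    ∃ B, B ⊆ A ∧ MeasurableSet B ∧ (volume.restrict (Set.Icc (0:ℝ) 1)) B = r := by
  set μ := volume.restrict (Set.Icc (0:ℝ) 1) with hμ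
  have hfin : ∀ s : Set ℝ, μ s ≤ 1 := by
    intro s
    calc μ s ≤ μ univ := measure_mono (subset_univ _)
      _ = 1 := by rw [hμ, Measure.restrict_apply_univ, Real.volume_Icc]; norm_num
  have hfin' : ∀ s, μ s ≠ ⊤ := fun s => ((hfin s).trans_lt ENNReal.one_lt_top).ne
  have hr_top : r ≠ ⊤ := (hr.trans_lt ((hfin A).trans_lt ENNReal.one_lt_top)).ne
  set h : ℝ → ℝ := fun x => (μ (A ∩ Iic x)).toReal with hh
  have hmono : ∀ {x y : ℝ}, x ≤ y → h x ≤ h y := by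
    intro x y hxy
    exact ENNReal.toReal_mono (hfin' _) (measure_mono (inter_subset_inter_right _ (Iic_subset_Iic.mpr hxy)))
  have hkey : ∀ {x y : ℝ}, x ≤ y → h y ≤ h x + (y - x) := by
    intro x y hxy
    have h1 : μ (A ∩ Iic y) ≤ μ (A ∩ Iic x) + ENNReal.ofReal (y - x) := by
      have hsub : A ∩ Iic y ⊆ (A ∩ Iic x) ∪ Ioc x y := by
        intro z hz
        rcases le_or_gt z x with hzx | hzx
        · exact Or.inl ⟨hz.1, hzx⟩
        · exact Or.inr ⟨hzx, hz.2⟩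
      calc μ (A ∩ Iic y) ≤ μ ((A ∩ Iic x) ∪ Ioc x y) := measure_mono hsub
        _ ≤ μ (A ∩ Iic x) + μ (Ioc x y) := measure_union_le _ _
        _ ≤ μ (A ∩ Iic x) + ENNReal.ofReal (y - x) := by
            refine add_le_add_right ?_ _
            calc μ (Ioc x y) ≤ volume (Ioc x y) := Measure.restrict_le_self _
              _ = ENNReal.ofReal (y - x) := Real.volume_Ioc
    have := ENNReal.toReal_mono (by
      exact ENNReal.add_ne_top.mpr ⟨hfin' _, ENNReal.ofReal_ne_top⟩) h1
    rw [ENNReal.toReal_add (hfin' _) ENNReal.ofReal_ne_top,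
      ENNReal.toReal_ofReal (by linarith)] at this
    exact this
  have hcont : Continuous h := by
    refine (LipschitzWith.of_dist_le_mul (K := 1) ?_).continuous
    intro x y
    rw [Real.dist_eq, Real.dist_eq, NNReal.coe_one, one_mul, abs_le]
    rcases le_total x y with hxy | hxy
    · have h1 := hkey hxy; have h2 := hmono hxy
      rw [abs_of_nonpos (by linarith : x - y ≤ 0)]
      constructor <;> linarith
    · have h1 := hkey hxy; have h2 := hmono hxy
      rw [abs_of_nonneg (by linarith : (0:ℝ) ≤ x - y)]
      constructor <;> linarith
  have hm1 : h (-1) = 0 := by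
    have : μ (A ∩ Iic (-1)) = 0 := by
      rw [hμ, Measure.restrict_apply (hA.inter measurableSet_Iic)]
      refine measure_mono_null ?_ (measure_empty)
      rintro z ⟨⟨_, hz1⟩, hz2, _⟩
      simp only [mem_Iic] at hz1
      linarith [hz2]
    simp [hh, this]
  have h2 : h 2 = (μ A).toReal := by
    have : A ∩ Iic 2 ∩ Icc (0:ℝ) 1 = A ∩ Icc (0:ℝ) 1 := by
      ext z; constructor
      · rintro ⟨⟨hz, _⟩, hz2⟩; exact ⟨hz, hz2⟩
      · rintro ⟨hz, hz2⟩; exact ⟨⟨hz, by simp [mem_Iic]; linarith [hz2.2]⟩, hz2⟩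
    simp only [hh]
    rw [hμ, Measure.restrict_apply (hA.inter measurableSet_Iic), this,
      ← Measure.restrict_apply hA]
  have hmem : r.toReal ∈ Icc (h (-1)) (h 2) := by
    rw [hm1, h2]
    exact ⟨ENNReal.toReal_nonneg, ENNReal.toReal_mono (hfin' A) hr⟩
  obtain ⟨x, -, hx⟩ := intermediate_value_Icc (by norm_num : (-1:ℝ) ≤ 2) hcont.continuousOn hmem
  refine ⟨A ∩ Iic x, inter_subset_left, hA.inter measurableSet_Iic, ?_⟩
  exact (ENNReal.toReal_eq_toReal_iff' (hfin' _) hr_top).mp hx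

lemma aux_blocks (S : Set ℝ) (hS : MeasurableSet S)
    (hS78 : ENNReal.ofReal (7/8) ≤ (volume.restrict (Set.Icc (0:ℝ) 1)) S) :
    ∃ B : ℕ → Set ℝ, (∀ k, MeasurableSet (B k)) ∧ (∀ k, B k ⊆ S) ∧
      (∀ k, (volume.restrict (Set.Icc (0:ℝ) 1)) (B k) = ENNReal.ofReal ((1/8:ℝ)^(k+1))) ∧
      (∀ j k, j ≠ k → Disjoint (B j) (B k)) := by
  classical
  set μ := volume.restrict (Set.Icc (0:ℝ) 1) with hμ
  set P : ℕ → Set ℝ → Prop :=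
    fun k W => ∃ C, C ⊆ S \ W ∧ MeasurableSet C ∧ μ C = ENNReal.ofReal ((1/8:ℝ)^(k+1)) with hP
  set pick : ℕ → Set ℝ → Set ℝ :=
    fun k W => if h : P k W then h.choose else ∅ with hpick
  set V : ℕ → Set ℝ := fun n => Nat.rec ∅ (fun k W => W ∪ pick k W) n with hV
  have hVs : ∀ k, V (k+1) = V k ∪ pick k (V k) := fun k => rfl
  have step : ∀ (k : ℕ) (W : Set ℝ), MeasurableSet W → μ W ≤ ENNReal.ofReal (1/7) → P k W := by
    intro k W hWm hWle
    have h1 : μ S ≤ μ (S \ W) + μ W := by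
      calc μ S ≤ μ ((S \ W) ∪ W) := measure_mono (fun x hx => by
              by_cases hxW : x ∈ W
              · exact Or.inr hxW
              · exact Or.inl ⟨hx, hxW⟩)
        _ ≤ μ (S \ W) + μ W := measure_union_le _ _
    have h2 : ENNReal.ofReal (7/8) ≤ μ (S \ W) + ENNReal.ofReal (1/7) :=
      hS78.trans (h1.trans (add_le_add_right hWle _))
    have h3 : ENNReal.ofReal (7/8 - 1/7) ≤ μ (S \ W) := by
      rw [ENNReal.ofReal_sub _ (by norm_num)]
      exact tsub_le_iff_right.mpr h2
    have h4 : ENNReal.ofReal ((1/8:ℝ)^(k+1)) ≤ μ (S \ W) := by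
      refine le_trans (ENNReal.ofReal_le_ofReal ?_) h3
      calc ((1/8:ℝ))^(k+1) ≤ (1/8:ℝ)^1 :=
            pow_le_pow_of_le_one (by norm_num) (by norm_num) (by omega)
        _ ≤ 7/8 - 1/7 := by norm_num
    obtain ⟨B, hB1, hB2, hB3⟩ := aux_subset_measure (S \ W) (hS.diff hWm) h4
    exact ⟨B, hB1, hB2, hB3⟩
  have inv : ∀ k, MeasurableSet (V k) ∧ μ (V k) ≤ ENNReal.ofReal (1/7 * (1 - (1/8:ℝ)^k)) := by
    intro k
    induction k with
    | zero => simp [hV]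
    | succ k ih =>
      obtain ⟨hm, hle⟩ := ih
      have hP' : P k (V k) := step k (V k) hm (hle.trans (ENNReal.ofReal_le_ofReal (by
        nlinarith [pow_nonneg (by norm_num : (0:ℝ) ≤ 1/8) k])))
      have hpickeq : pick k (V k) = hP'.choose := by rw [hpick]; exact dif_pos hP'
      obtain ⟨hC1, hC2, hC3⟩ := hP'.choose_spec
      constructor
      · rw [hVs k, hpickeq]; exact hm.union hC2
      · rw [hVs k, hpickeq]
        calc μ (V k ∪ hP'.choose) ≤ μ (V k) + μ hP'.choose := measure_union_le _ _
          _ ≤ ENNReal.ofReal (1/7 * (1 - (1/8:ℝ)^k)) + ENNReal.ofReal ((1/8:ℝ)^(k+1)) := by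
              rw [hC3]; exact add_le_add_left hle _
          _ = ENNReal.ofReal (1/7 * (1 - (1/8:ℝ)^(k+1))) := by
              rw [← ENNReal.ofReal_add (by nlinarith [pow_nonneg (by norm_num : (0:ℝ) ≤ 1/8) k, pow_le_one₀ (by norm_num : (0:ℝ) ≤ 1/8) (by norm_num : (1/8:ℝ) ≤ 1) (n := k)]) (by positivity)]
              congr 1
              rw [pow_succ]; ring
  have hPk : ∀ k, P k (V k) := fun k => (by
    obtain ⟨hm, hle⟩ := inv k
    exact step k (V k) hm (hle.trans (ENNReal.ofReal_le_ofReal (by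
      nlinarith [pow_nonneg (by norm_num : (0:ℝ) ≤ 1/8) k]))))
  set B : ℕ → Set ℝ := fun k => pick k (V k) with hB
  have hBspec : ∀ k, B k ⊆ S \ V k ∧ MeasurableSet (B k) ∧
      μ (B k) = ENNReal.ofReal ((1/8:ℝ)^(k+1)) := by
    intro k
    have : B k = (hPk k).choose := by rw [hB, hpick]; exact dif_pos (hPk k)
    rw [this]; exact (hPk k).choose_spec
  have hVmono : ∀ j k, j ≤ k → V j ⊆ V k := by
    intro j k hjk
    induction k with
    | zero =>
      have hj0 : j = 0 := by omega
      rw [hj0]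
    | succ k ih =>
      rcases Nat.lt_or_ge j (k+1) with h | h
      · exact (ih (by omega)).trans (by rw [hVs k]; exact subset_union_left)
      · have : j = k + 1 := by omega
        rw [this]
  have hBV : ∀ j k, j < k → B j ⊆ V k := by
    intro j k hjk
    have h1 : B j ⊆ V (j+1) := by rw [hVs j]; exact subset_union_right
    exact h1.trans (hVmono (j+1) k (by omega))
  refine ⟨B, fun k => (hBspec k).2.1, fun k => ((hBspec k).1).trans diff_subset, fun k => (hBspec k).2.2, ?_⟩
  have key : ∀ j k, j < k → Disjoint (B j) (B k) := by
    intro j k hjk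
    refine Set.disjoint_left.mpr fun x hxj hxk => ?_
    exact ((hBspec k).1 hxk).2 (hBV j k hjk hxj)
  intro j k hjk
  rcases Nat.lt_or_ge j k with h | h
  · exact key j k h
  · exact (key k j (by omega)).symm

/-- for 1 < p < ∞, the space L_{p,∞}[0,1] has no quasi-interior point,
i.e. there is no 0 ≤ u in L_{p,∞} such that ‖f − f ∧ n·u‖_{p,∞} → 0 for every
0 ≤ f in L_{p,∞}. -/
theorem weakLp_no_quasiInterior_point (p : ℝ) (hp : 1 < p) :
    ¬ ∃ u : ℝ → ℝ, Measurable u ∧ 0 ≤ u ∧ wLpNorm p u < ⊤ ∧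
      ∀ f : ℝ → ℝ, Measurable f → 0 ≤ f → wLpNorm p f < ⊤ →
        Tendsto (fun n : ℕ => wLpNorm p (fun x => f x - min (f x) ((n : ℝ) * u x)))
          atTop (𝓝 0) := by
  rintro ⟨u, hu_meas, hu_nonneg, hu_fin, hu_qip⟩
  set μ := volume.restrict (Set.Icc (0:ℝ) 1) with hμ
  have hp0 : (0:ℝ) < p := by linarith
  have hp0' : p ≠ 0 := ne_of_gt hp0
  have hip : (0:ℝ) < 1/p := by positivity
  have hip1 : 1/p ≤ 1 := by rw [div_le_one hp0]; linarith
  -- distribution bound for u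
  have hdist : ∀ t : ℝ, 0 < t →
      ENNReal.ofReal t * (μ {x | t < |u x|}) ^ (1/p) ≤ wLpNorm p u := by
    intro t ht
    rw [wLpNorm]
    exact le_iSup (fun s : {t : ℝ // 0 < t} =>
      ENNReal.ofReal s.1 * (μ {x | s.1 < |u x|}) ^ (1/p)) ⟨t, ht⟩
  set M : ℝ≥0∞ := wLpNorm p u + 1 with hM
  have hM_ne_top : M ≠ ⊤ := ENNReal.add_ne_top.mpr ⟨hu_fin.ne, one_ne_top⟩
  have hM_ne0 : M ≠ 0 := by
    have h1 : (1:ℝ≥0∞) ≤ M := le_add_self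
    exact (lt_of_lt_of_le one_pos h1).ne'
  have h8top : ((8:ℝ≥0∞) ^ (1/p)) ≠ ⊤ :=
    ENNReal.rpow_ne_top_of_nonneg hip.le (by norm_num)
  have h8ne0 : ((8:ℝ≥0∞) ^ (1/p)) ≠ 0 := by
    simp [ENNReal.rpow_eq_zero_iff]
  set τ : ℝ := (M * (8:ℝ≥0∞) ^ (1/p)).toReal with hτ
  have hτpos : 0 < τ :=
    ENNReal.toReal_pos (mul_ne_zero hM_ne0 h8ne0) (ENNReal.mul_ne_top hM_ne_top h8top)
  have hofτ : ENNReal.ofReal τ = M * (8:ℝ≥0∞) ^ (1/p) :=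
    ENNReal.ofReal_toReal (ENNReal.mul_ne_top hM_ne_top h8top)
  -- tail bound
  have hA : μ {x | τ < |u x|} ≤ ENNReal.ofReal (1/8) := by
    set A := μ {x | τ < |u x|} with hAdef
    have h1 : M * ((8:ℝ≥0∞) ^ (1/p) * A ^ (1/p)) ≤ M * 1 := by
      rw [mul_one, ← mul_assoc, ← hofτ]
      exact (hdist τ hτpos).trans (by rw [hM]; exact le_self_add)
    have h2 : (8:ℝ≥0∞) ^ (1/p) * A ^ (1/p) ≤ 1 :=
      (ENNReal.mul_le_mul_iff_right hM_ne0 hM_ne_top).mp h1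
    have h3 : ((8:ℝ≥0∞) * A) ^ (1/p) ≤ 1 := by
      rw [ENNReal.mul_rpow_of_nonneg _ _ hip.le]; exact h2
    have h4 : (8:ℝ≥0∞) * A ≤ 1 := by
      have h5 := ENNReal.rpow_le_rpow h3 hp0.le
      rwa [← ENNReal.rpow_mul, one_div_mul_cancel hp0', ENNReal.rpow_one,
        ENNReal.one_rpow] at h5
    have h5 : A ≤ 8⁻¹ := ENNReal.le_inv_iff_mul_le.mpr (by rwa [mul_comm] at h4)
    have h6 : ENNReal.ofReal (1/8) = (8:ℝ≥0∞)⁻¹ := by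
      rw [one_div, ENNReal.ofReal_inv_of_pos (by norm_num)]
      norm_num
    rwa [h6]
  -- the good set
  set S : Set ℝ := {x | u x ≤ τ} with hSdef
  have hS_meas : MeasurableSet S := measurableSet_le hu_meas measurable_const
  have hScompl : Sᶜ = {x | τ < |u x|} := by
    ext x
    simp [hSdef, abs_of_nonneg (hu_nonneg x), not_le]
  have hμuniv : μ univ = 1 := by
    rw [hμ, Measure.restrict_apply_univ, Real.volume_Icc]; norm_num
  have hS78 : ENNReal.ofReal (7/8) ≤ μ S := by
    have h1 : μ S + μ Sᶜ = 1 := by rw [measure_add_measure_compl hS_meas, hμuniv]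
    have h2 : (1:ℝ≥0∞) ≤ μ S + ENNReal.ofReal (1/8) := by
      rw [← h1]
      exact add_le_add_right (by rw [hScompl]; exact hA) _
    have h3 : ENNReal.ofReal (7/8) + ENNReal.ofReal (1/8) = 1 := by
      rw [← ENNReal.ofReal_add (by norm_num) (by norm_num)]; norm_num
    have h4 : ENNReal.ofReal (7/8) + ENNReal.ofReal (1/8)
        ≤ μ S + ENNReal.ofReal (1/8) := by rw [h3]; exact h2
    exact (ENNReal.add_le_add_iff_right ENNReal.ofReal_ne_top).mp h4
  obtain ⟨B, hBm, hBS, hBμ, hBdisj⟩ := aux_blocks S hS_meas hS78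
  -- the test function f
  set a : ℕ → ℝ := fun k => 2 * τ * (8:ℝ) ^ (((k:ℝ)+1)/p) with ha
  have ha_pos : ∀ k, 0 < a k := fun k => by
    have := Real.rpow_pos_of_pos (by norm_num : (0:ℝ) < 8) (((k:ℝ)+1)/p)
    rw [ha]; positivity
  set F : ℕ → ℝ → ℝ≥0∞ := fun k => (B k).indicator (fun _ => ENNReal.ofReal (a k)) with hF
  set f : ℝ → ℝ := fun x => (∑' k, F k x).toReal with hf
  have hf_meas : Measurable f :=
    (Measurable.ennreal_tsum fun k => measurable_const.indicator (hBm k)).ennreal_toReal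
  have hf_nonneg : 0 ≤ f := fun x => ENNReal.toReal_nonneg
  have hfval : ∀ k x, x ∈ B k → f x = a k := by
    intro k x hx
    have h1 : ∑' j, F j x = ENNReal.ofReal (a k) := by
      rw [tsum_eq_single k]
      · simp only [hF, indicator_of_mem hx]
      · intro j hj
        have hxj : x ∉ B j := fun hxj =>
          (Set.disjoint_left.mp (hBdisj j k hj) hxj) hx
        simp only [hF, indicator_of_notMem hxj]
    simp only [hf]
    rw [h1, ENNReal.toReal_ofReal (ha_pos k).le]
  have hfval0 : ∀ x, (∀ k, x ∉ B k) → f x = 0 := by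
    intro x hx
    have h1 : ∑' j, F j x = 0 := by
      rw [ENNReal.summable.tsum_eq_zero_iff]
      intro j
      simp only [hF, indicator_of_notMem (hx j)]
    simp only [hf]
    rw [h1, ENNReal.toReal_zero]
  -- helper: rpow computation
  have hpow8 : ∀ m : ℕ, (((1/8:ℝ))^m) ^ (1/p) = (8:ℝ) ^ (-(m:ℝ)/p) := by
    intro m
    have h1 : ((1/8:ℝ))^m = (8:ℝ) ^ (-(m:ℝ)) := by
      rw [Real.rpow_neg (by norm_num), Real.rpow_natCast, one_div, inv_pow]
    rw [h1, ← Real.rpow_mul (by norm_num)]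
    ring_nf
  -- upper bound on the norm of f
  have hf_fin : wLpNorm p f ≤ ENNReal.ofReal (16 * τ) := by
    rw [wLpNorm]
    refine iSup_le ?_
    rintro ⟨t, ht⟩
    by_cases hex : ∃ k, t < a k
    · set k₀ := Nat.find hex with hk₀
      have hk0t : t < a k₀ := Nat.find_spec hex
      have hsub : {x | t < |f x|} ⊆ ⋃ j : ℕ, B (k₀ + j) := by
        intro x hx
        simp only [mem_setOf_eq, abs_of_nonneg (hf_nonneg x)] at hx
        by_cases hxB : ∃ k, x ∈ B k
        · obtain ⟨k, hk⟩ := hxB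
          have htk : t < a k := by rwa [hfval k x hk] at hx
          have hk₀k : k₀ ≤ k := Nat.find_min' hex htk
          exact mem_iUnion.mpr ⟨k - k₀, by rwa [Nat.add_sub_cancel' hk₀k]⟩
        · push_neg at hxB
          rw [hfval0 x hxB] at hx
          linarith
      have hmeas_le : μ {x | t < |f x|} ≤ ENNReal.ofReal ((1/8:ℝ)^k₀) := by
        have hsummable : Summable (fun j : ℕ => ((1/8:ℝ))^(k₀ + j + 1)) := by
          simp_rw [show ∀ j, k₀ + j + 1 = (k₀ + 1) + j by omega, pow_add]
          exact (summable_geometric_of_lt_one (by norm_num) (by norm_num)).mul_left _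
        calc μ {x | t < |f x|} ≤ μ (⋃ j : ℕ, B (k₀ + j)) := measure_mono hsub
          _ ≤ ∑' j, μ (B (k₀ + j)) := measure_iUnion_le _
          _ = ∑' j : ℕ, ENNReal.ofReal (((1/8:ℝ))^(k₀ + j + 1)) :=
              tsum_congr fun j => hBμ (k₀ + j)
          _ = ENNReal.ofReal (∑' j : ℕ, ((1/8:ℝ))^(k₀ + j + 1)) :=
              (ENNReal.ofReal_tsum_of_nonneg (fun j => by positivity) hsummable).symm
          _ ≤ ENNReal.ofReal ((1/8:ℝ)^k₀) := by
              refine ENNReal.ofReal_le_ofReal ?_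
              have : (∑' j : ℕ, ((1/8:ℝ))^(k₀ + j + 1))
                  = (1/8:ℝ)^(k₀+1) * (1 - 1/8)⁻¹ := by
                simp_rw [show ∀ j, k₀ + j + 1 = (k₀ + 1) + j by omega, pow_add]
                rw [tsum_mul_left, tsum_geometric_of_lt_one (by norm_num) (by norm_num)]
              rw [this, pow_succ]
              nlinarith [pow_nonneg (by norm_num : (0:ℝ) ≤ 1/8) k₀]
      calc ENNReal.ofReal t * (μ {x | t < |f x|}) ^ (1/p)
          ≤ ENNReal.ofReal t * (ENNReal.ofReal ((1/8:ℝ)^k₀)) ^ (1/p) :=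
            mul_le_mul_right (ENNReal.rpow_le_rpow hmeas_le hip.le) _
        _ = ENNReal.ofReal (t * (((1/8:ℝ))^k₀) ^ (1/p)) := by
            rw [ENNReal.ofReal_rpow_of_pos (by positivity),
              ← ENNReal.ofReal_mul ht.le]
        _ ≤ ENNReal.ofReal (16 * τ) := by
            refine ENNReal.ofReal_le_ofReal ?_
            rw [hpow8 k₀]
            have hfac : (0:ℝ) < (8:ℝ) ^ (-(k₀:ℝ)/p) :=
              Real.rpow_pos_of_pos (by norm_num) _
            have h1 : t * (8:ℝ) ^ (-(k₀:ℝ)/p) ≤ a k₀ * (8:ℝ) ^ (-(k₀:ℝ)/p) := by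
              exact mul_le_mul_of_nonneg_right hk0t.le hfac.le
            have h2 : a k₀ * (8:ℝ) ^ (-(k₀:ℝ)/p) = 2 * τ * (8:ℝ) ^ (1/p) := by
              rw [ha]
              rw [mul_assoc, ← Real.rpow_add (by norm_num : (0:ℝ) < 8)]
              congr 2
              field_simp
              ring
            have h3 : (8:ℝ) ^ (1/p) ≤ 8 := by
              calc (8:ℝ) ^ (1/p) ≤ (8:ℝ) ^ (1:ℝ) :=
                Real.rpow_le_rpow_of_exponent_le (by norm_num) hip1
                _ = 8 := Real.rpow_one 8
            nlinarith
    · push_neg at hex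
      have hempty : {x | t < |f x|} = (∅ : Set ℝ) := by
        ext x
        simp only [mem_setOf_eq, mem_empty_iff_false, iff_false, not_lt,
          abs_of_nonneg (hf_nonneg x)]
        by_cases hxB : ∃ k, x ∈ B k
        · obtain ⟨k, hk⟩ := hxB
          rw [hfval k x hk]; exact hex k
        · push_neg at hxB
          rw [hfval0 x hxB]; exact ht.le
      rw [hempty, measure_empty, ENNReal.zero_rpow_of_pos hip, mul_zero]
      exact zero_le
  have hf_finite : wLpNorm p f < ⊤ := hf_fin.trans_lt ENNReal.ofReal_lt_top
  -- lower bound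
  have hlow : ∀ n : ℕ, ∀ j : ℕ, (n:ℝ) ≤ (8:ℝ) ^ (((j:ℝ)+1)/p) →
      ENNReal.ofReal (τ/2) ≤ wLpNorm p (fun x => f x - min (f x) ((n : ℝ) * u x)) := by
    intro n j hnj
    rw [wLpNorm]
    have ht4 : 0 < a j / 4 := by linarith [ha_pos j]
    refine le_trans ?_ (le_iSup (fun s : {t : ℝ // 0 < t} =>
      ENNReal.ofReal s.1 *
        (μ {x | s.1 < |f x - min (f x) ((n : ℝ) * u x)|}) ^ (1/p)) ⟨a j / 4, ht4⟩)
    have hsub : B j ⊆ {x | a j / 4 < |f x - min (f x) ((n:ℝ) * u x)|} := by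
      intro x hx
      have hfx : f x = a j := hfval j x hx
      have hux : u x ≤ τ := hBS j hx
      have hnu : (n:ℝ) * u x ≤ a j / 2 := by
        have h1 : (n:ℝ) * u x ≤ (8:ℝ)^(((j:ℝ)+1)/p) * τ :=
          mul_le_mul hnj hux (hu_nonneg x) (by positivity)
        rw [ha]; nlinarith
      have hmin : min (f x) ((n:ℝ) * u x) ≤ a j / 2 := (min_le_right _ _).trans hnu
      have hge : a j / 2 ≤ f x - min (f x) ((n:ℝ) * u x) := by linarith [hfx.le, hfx.ge]
      have hnn : 0 ≤ f x - min (f x) ((n:ℝ) * u x) :=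
        sub_nonneg.mpr (min_le_left _ _)
      rw [mem_setOf_eq, abs_of_nonneg hnn]
      linarith [ha_pos j]
    have hμBj : ENNReal.ofReal ((1/8:ℝ)^(j+1))
        ≤ μ {x | a j / 4 < |f x - min (f x) ((n:ℝ) * u x)|} := by
      rw [← hBμ j]
      exact measure_mono hsub
    calc ENNReal.ofReal (τ/2)
        = ENNReal.ofReal (a j / 4) * ENNReal.ofReal (((1/8:ℝ))^(j+1)) ^ (1/p) := by
          rw [ENNReal.ofReal_rpow_of_pos (by positivity),
            ← ENNReal.ofReal_mul (by linarith [ha_pos j])]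
          congr 1
          rw [hpow8 (j+1), ha]
          push_cast
          rw [show 2 * τ * (8:ℝ) ^ (((j:ℝ)+1)/p) / 4 * (8:ℝ) ^ (-((j:ℝ)+1)/p)
              = τ/2 * ((8:ℝ) ^ (((j:ℝ)+1)/p) * (8:ℝ) ^ (-((j:ℝ)+1)/p)) by ring,
            ← Real.rpow_add (by norm_num : (0:ℝ) < 8)]
          rw [show ((j:ℝ)+1)/p + -((j:ℝ)+1)/p = 0 by ring, Real.rpow_zero, mul_one]
      _ ≤ ENNReal.ofReal (a j / 4) *
          (μ {x | a j / 4 < |f x - min (f x) ((n:ℝ) * u x)|}) ^ (1/p) :=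
          mul_le_mul_right (ENNReal.rpow_le_rpow hμBj hip.le) _
  -- conclude
  have htend := hu_qip f hf_meas hf_nonneg hf_finite
  have hδ : (0:ℝ≥0∞) < ENNReal.ofReal (τ/2) := ENNReal.ofReal_pos.mpr (by linarith)
  have hev := htend.eventually (gt_mem_nhds hδ)
  rw [eventually_atTop] at hev
  obtain ⟨N, hN⟩ := hev
  set j := ⌈p * (N:ℝ)⌉₊ with hj
  have hNle : (N:ℝ) ≤ (8:ℝ) ^ (((j:ℝ)+1)/p) := by
    have h1 : p * N ≤ (j:ℝ) + 1 := (Nat.le_ceil _).trans (by linarith)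
    have h2 : (N:ℝ) ≤ ((j:ℝ)+1)/p := by
      rw [le_div_iff₀ hp0]
      nlinarith
    have h3 : (N:ℝ) ≤ (8:ℝ)^(N:ℝ) := by
      rw [Real.rpow_natCast]
      exact_mod_cast (Nat.lt_pow_self (n := N) (by norm_num)).le
    exact h3.trans (Real.rpow_le_rpow_of_exponent_le (by norm_num) h2)
  set n := ⌊(8:ℝ) ^ (((j:ℝ)+1)/p)⌋₊ with hn
  have hnN : N ≤ n := Nat.le_floor hNle
  have hfl : (n:ℝ) ≤ (8:ℝ) ^ (((j:ℝ)+1)/p) := Nat.floor_le (by positivity)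
  exact absurd (hN n hnN) (not_lt.mpr (hlow n j hfl))
end

section
/- Let X be an order continuous Banach lattice, C ⊆ X a solid set, and A ⊆ C₊ a maximal set of pairwise disjoint positive vectors in C. Then C is contained in the closed ideal generated by A. -/
open Filter Topology Set

/-- in an order continuous Banach lattice, a solid set C is contained
in the closed ideal generated by any maximal pairwise disjoint subset of C₊. -/
theorem solid_subset_idealGen_of_maximal_disjoint
    {X : Type*} [NormedAddCommGroup X] [Lattice X] [HasSolidNorm X] [IsOrderedAddMonoid X]
    [NormedSpace ℝ X] [CompleteSpace X]
    (hX : OrderContinuousBL X)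
    (C A : Set X)
    (hCsolid : ∀ x y : X, y ∈ C → |x| ≤ |y| → x ∈ C)
    (hAC : A ⊆ C) (hApos : ∀ x ∈ A, 0 ≤ x)
    (hAdisj : ∀ x ∈ A, ∀ y ∈ A, x ≠ y → x ⊓ y = 0)
    (hAmax : ∀ B : Set X, A ⊆ B → B ⊆ C → (∀ x ∈ B, 0 ≤ x) →
      (∀ x ∈ B, ∀ y ∈ B, x ≠ y → x ⊓ y = 0) → B = A) :
    C ⊆ idealGen A := by
  intro x hx
  have hIclosed : IsClosed (idealGen A) := by
    apply isClosed_sInter; rintro S ⟨⟨h, _⟩, _⟩; exact h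
  have hI0 : (0 : X) ∈ idealGen A := fun S hS => hS.1.2.1
  have hIadd : ∀ p ∈ idealGen A, ∀ q ∈ idealGen A, p + q ∈ idealGen A :=
    fun p hp q hq S hS => hS.1.2.2.1 p (hp S hS) q (hq S hS)
  have hIsmul : ∀ c : ℝ, ∀ p ∈ idealGen A, c • p ∈ idealGen A :=
    fun c p hp S hS => hS.1.2.2.2.1 c p (hp S hS)
  have hIsolid : ∀ p q : X, q ∈ idealGen A → |p| ≤ |q| → p ∈ idealGen A :=
    fun p q hq h S hS => hS.1.2.2.2.2 p (q) (hq S hS) h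
  have hAI : A ⊆ idealGen A := fun a ha S hS => hS.2 ha
  set u := |x| with hu_def
  have hu0 : 0 ≤ u := abs_nonneg x
  have huC : u ∈ C := hCsolid u x hx (by rw [abs_abs])
  set D := {v : X | v ∈ idealGen A ∧ 0 ≤ v ∧ v ≤ u} with hD_def
  have h0D : (0 : X) ∈ D := ⟨hI0, le_refl 0, hu0⟩
  have hDmem : ∀ a ∈ A, ∀ n : ℕ, u ⊓ (n • a) ∈ D := by
    intro a ha n
    have hna : (n • a) ∈ idealGen A := by
      have := hIsmul (n : ℝ) a (hAI ha)
      rwa [Nat.cast_smul_eq_nsmul] at this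
    have h1 : 0 ≤ n • a := nsmul_nonneg (hApos a ha) n
    have h2 : (0 : X) ≤ u ⊓ (n • a) := le_inf hu0 h1
    refine ⟨hIsolid _ _ hna ?_, h2, inf_le_left⟩
    rw [abs_of_nonneg h2, abs_of_nonneg h1]; exact inf_le_right
  have hlub : IsLUB D u := by
    constructor
    · intro v hv; exact hv.2.2
    · intro w hw
      have hw0 : 0 ≤ w := hw h0D
      set z := u - u ⊓ w with hz_def
      have hz0 : 0 ≤ z := sub_nonneg.mpr inf_le_left
      have hzu : z ≤ u := sub_le_self _ (le_inf hu0 hw0)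
      have hzdisj : ∀ a ∈ A, z ⊓ a = 0 := by
        intro a ha
        set c := z ⊓ a with hc_def
        have hc0 : 0 ≤ c := le_inf hz0 (hApos a ha)
        have key : ∀ n : ℕ, n • c ≤ u ⊓ (n • a) := by
          intro n
          induction n with
          | zero => simp [inf_of_le_right hu0]
          | succ n ih =>
            have h1 : u ⊓ (n • a) ≤ u ⊓ w := le_inf inf_le_left (hw (hDmem a ha n))
            have h2 : c ≤ u - u ⊓ (n • a) :=
              le_trans inf_le_left (sub_le_sub_left h1 u)
            rw [succ_nsmul, succ_nsmul]
            calc n • c + c ≤ u ⊓ (n • a) + c := add_le_add_left ih c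
              _ ≤ u ⊓ (n • a + a) := by
                  refine le_inf ?_ (add_le_add inf_le_right inf_le_right)
                  have := add_le_add_left h2 (u ⊓ (n • a))
                  rwa [sub_add_cancel, add_comm] at this
        have hc : c = 0 := by
          by_contra hne
          have hpos : 0 < ‖c‖ := norm_pos_iff.mpr hne
          obtain ⟨n, hn⟩ := exists_nat_gt (‖u‖ / ‖c‖)
          have h1 : ‖n • c‖ ≤ ‖u‖ := by
            apply norm_le_norm_of_abs_le_abs
            rw [abs_of_nonneg (nsmul_nonneg hc0 n), abs_of_nonneg hu0]
            exact le_trans (key n) inf_le_left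
          have h2 : ‖n • c‖ = n * ‖c‖ := by
            rw [← Nat.cast_smul_eq_nsmul ℝ, norm_smul, Real.norm_natCast]
          rw [h2] at h1
          rw [div_lt_iff₀ hpos] at hn
          linarith
        exact hc
      have hzC : z ∈ C := hCsolid z u huC
        (by rw [abs_of_nonneg hz0, abs_of_nonneg hu0]; exact hzu)
      have hz_eq : z = 0 := by
        have hBA : insert z A = A := by
          apply hAmax
          · exact subset_insert _ _
          · intro p hp
            rcases hp with rfl | hp
            · exact hzC
            · exact hAC hp
          · intro p hp
            rcases hp with rfl | hp
            · exact hz0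
            · exact hApos p hp
          · intro p hp q hq hpq
            rcases hp with rfl | hp <;> rcases hq with rfl | hq
            · exact absurd rfl hpq
            · exact hzdisj q hq
            · rw [inf_comm]; exact hzdisj p hp
            · exact hAdisj p hp q hq hpq
        have hzA : z ∈ A := hBA ▸ mem_insert z A
        have := hzdisj z hzA
        rwa [inf_idem] at this
      have : u = u ⊓ w := by rw [← sub_eq_zero]; exact hz_eq
      exact this.le.trans inf_le_right
  have huI : u ∈ idealGen A := by
    rw [← hIclosed.closure_eq, Metric.mem_closure_iff]
    intro ε hε
    set G := (fun v => u - v) '' D with hG_def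
    have hGne : G.Nonempty := ⟨u, 0, h0D, by simp⟩
    have hGdir : DirectedOn (· ≥ ·) G := by
      rintro _ ⟨v1, hv1, rfl⟩ _ ⟨v2, hv2, rfl⟩
      have hsup : v1 ⊔ v2 ∈ D := by
        refine ⟨hIsolid _ (v1 + v2) (hIadd v1 hv1.1 v2 hv2.1) ?_,
          le_trans hv1.2.1 le_sup_left, sup_le hv1.2.2 hv2.2.2⟩
        have h0 : (0 : X) ≤ v1 ⊔ v2 := le_trans hv1.2.1 le_sup_left
        rw [abs_of_nonneg h0, abs_of_nonneg (add_nonneg hv1.2.1 hv2.2.1)]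
        exact sup_le (le_add_of_nonneg_right hv2.2.1) (le_add_of_nonneg_left hv1.2.1)
      exact ⟨u - (v1 ⊔ v2), ⟨v1 ⊔ v2, hsup, rfl⟩,
        sub_le_sub_left le_sup_left u, sub_le_sub_left le_sup_right u⟩
    have hGglb : IsGLB G 0 := by
      constructor
      · rintro _ ⟨v, hv, rfl⟩; exact sub_nonneg.mpr hv.2.2
      · intro b hb
        have h1 : ∀ v ∈ D, v ≤ u - b := by
          intro v hv
          have := hb ⟨v, hv, rfl⟩
          exact le_sub_comm.mp this
        have h2 : u ≤ u - b := hlub.2 h1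
        exact (le_sub_self_iff u).mp h2
    obtain ⟨d, hdG, hd⟩ := hX G hGne hGdir hGglb ε hε
    obtain ⟨v, hvD, rfl⟩ := hdG
    exact ⟨v, hvD.1, by rw [dist_eq_norm]; exact hd _ ⟨v, hvD, rfl⟩ le_rfl⟩
  exact hIsolid x u huI (by rw [abs_abs])
end

section
/- If X is a weakly precompactly generated Banach space, then X contains no subspace isomorphic to ℓ∞. -/
open Filter Topology Set

namespace WPGAux


/-! ### An independent family of subsets of ℕ indexed by ℝ (Fichtenholz–Kantorovich) -/

abbrev Base := Finset ℚ × Finset (Finset ℚ)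

open Classical in
noncomputable def cutF (x : ℝ) (F : Finset ℚ) : Finset ℚ := F.filter fun q => (q : ℝ) ≤ x

def InB (x : ℝ) (b : Base) : Prop := cutF x b.1 ∈ b.2

noncomputable def Sx (x : ℝ) : Set ℕ :=
  {n | ∃ b : Base, InB x b ∧ Encodable.encode b = n}

open Classical in
lemma cutF_ne {i j : ℝ} {F : Finset ℚ} {q : ℚ} (hq : q ∈ F) (h1 : i < (q:ℝ)) (h2 : (q:ℝ) ≤ j) :
    cutF j F ≠ cutF i F := by
  intro h
  have hqj : q ∈ cutF j F := Finset.mem_filter.2 ⟨hq, h2⟩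
  rw [h] at hqj
  exact absurd (Finset.mem_filter.1 hqj).2 (not_le.2 h1)

open Classical in
lemma indep_Sx {m : ℕ} (x : Fin m → ℝ) (hx : Function.Injective x) (P : Fin m → Prop) :
    {n : ℕ | ∀ i, (n ∈ Sx (x i) ↔ P i)}.Infinite := by
  -- separating rationals
  have hsep : ∀ p : Fin m × Fin m, ∃ q : ℚ, x p.1 < x p.2 → x p.1 < (q:ℝ) ∧ ((q:ℝ) < x p.2) := by
    intro p
    by_cases h : x p.1 < x p.2
    · obtain ⟨q, hq1, hq2⟩ := exists_rat_btwn h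
      exact ⟨q, fun _ => ⟨hq1, hq2⟩⟩
    · exact ⟨0, fun h' => absurd h' h⟩
  choose sep hsepspec using hsep
  set F₀ : Finset ℚ := Finset.image sep Finset.univ with hF₀
  -- key: distinct cuts
  have key : ∀ F : Finset ℚ, F₀ ⊆ F → ∀ i j, i ≠ j → cutF (x i) F ≠ cutF (x j) F := by
    intro F hF i j hij
    rcases lt_trichotomy (x i) (x j) with h | h | h
    · have hq := hsepspec (i, j) h
      intro hc
      exact cutF_ne (hF (Finset.mem_image_of_mem sep (Finset.mem_univ (i,j))))
        hq.1 (le_of_lt hq.2) hc.symm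
    · exact absurd (hx h) hij
    · have hq := hsepspec (j, i) h
      exact cutF_ne (hF (Finset.mem_image_of_mem sep (Finset.mem_univ (j,i)))) hq.1 (le_of_lt hq.2)
  -- the witnesses
  set bq : ℚ → Base := fun q =>
    (insert q F₀, Finset.image (fun i => cutF (x i) (insert q F₀))
      (Finset.univ.filter fun i => P i)) with hbq
  have hpat : ∀ q i, InB (x i) (bq q) ↔ P i := by
    intro q i
    constructor
    · intro h
      obtain ⟨j, hj, hji⟩ := Finset.mem_image.1 h
      have hPj : P j := (Finset.mem_filter.1 hj).2
      by_cases hij : j = i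
      · rwa [hij] at hPj
      · exact absurd hji (key _ (Finset.subset_insert _ _) j i hij)
    · intro h
      exact Finset.mem_image_of_mem _ (Finset.mem_filter.2 ⟨Finset.mem_univ i, h⟩)
  have hmem : ∀ q i, (Encodable.encode (bq q) ∈ Sx (x i)) ↔ P i := by
    intro q i
    rw [← hpat q i]
    constructor
    · rintro ⟨b, hb, hbe⟩
      rwa [← Encodable.encode_injective hbe]
    · intro h; exact ⟨bq q, h, rfl⟩
  -- infinitude
  have hinj : Set.InjOn (fun q => Encodable.encode (bq q)) {q : ℚ | q ∉ F₀} := by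
    intro q hq q' hq' h
    have hb : bq q = bq q' := Encodable.encode_injective h
    have h1 : insert q F₀ = insert q' F₀ := congrArg Prod.fst hb
    have : q ∈ insert q' F₀ := h1 ▸ Finset.mem_insert_self q F₀
    rcases Finset.mem_insert.1 this with h | h
    · exact h
    · exact absurd h hq
  have hQinf : {q : ℚ | q ∉ F₀}.Infinite := by
    have : ((F₀ : Set ℚ))ᶜ.Infinite := (F₀.finite_toSet).infinite_compl
    convert this using 1
    ext q; simp
  apply Set.Infinite.mono (s := (fun q => Encodable.encode (bq q)) '' {q : ℚ | q ∉ F₀})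
  · rintro n ⟨q, _, rfl⟩
    intro i
    exact hmem q i
  · exact hQinf.image hinj


noncomputable section

open Classical in
/-- The indicator of a set of naturals, as an element of `ℓ∞`. -/
def chi (S : Set ℕ) : lp (fun _ : ℕ => ℝ) ⊤ :=
  ⟨fun n => if n ∈ S then (1 : ℝ) else 0, memℓp_infty ⟨1, by
    rintro r ⟨n, rfl⟩
    dsimp only
    split <;> simp⟩⟩

open Classical in
lemma chi_apply (S : Set ℕ) (n : ℕ) : (chi S : ∀ _ : ℕ, ℝ) n = if n ∈ S then (1:ℝ) else 0 := rfl

variable {X : Type*} [NormedAddCommGroup X] [NormedSpace ℝ X]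

/-- coordinate functionals extending the coordinates through an embedding of ℓ∞. -/
lemma exists_coord_functionals (e : (lp (fun _ : ℕ => ℝ) ⊤) →L[ℝ] X) {c : ℝ} (hc : 0 < c)
    (he : ∀ v : lp (fun _ : ℕ => ℝ) ⊤, c * ‖v‖ ≤ ‖e v‖) :
    ∃ g : ℕ → (X →L[ℝ] ℝ), (∀ n v, g n (e v) = (v : ∀ _ : ℕ, ℝ) n) ∧
      (∀ n x, |g n x| ≤ c⁻¹ * ‖x‖) := by
  have hinj : Function.Injective (e : (lp (fun _ : ℕ => ℝ) ⊤) →ₗ[ℝ] X) := by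
    intro v w hvw
    have h0 : e (v - w) = 0 := by
      simp only [ContinuousLinearMap.coe_coe] at hvw
      rw [map_sub, hvw, sub_self]
    have := he (v - w)
    rw [h0, norm_zero] at this
    have : ‖v - w‖ ≤ 0 := by nlinarith [norm_nonneg (v - w)]
    have : v - w = 0 := by
      rwa [← norm_le_zero_iff]
    exact sub_eq_zero.1 this
  set eq := LinearEquiv.ofInjective (e : (lp (fun _ : ℕ => ℝ) ⊤) →ₗ[ℝ] X) hinj with heq
  -- the coordinate maps on ℓ∞
  have hcoord : ∀ n : ℕ, ∃ φ : (lp (fun _ : ℕ => ℝ) ⊤) →ₗ[ℝ] ℝ,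
      ∀ v, φ v = (v : ∀ _ : ℕ, ℝ) n := by
    intro n
    refine ⟨{ toFun := fun v => (v : ∀ _ : ℕ, ℝ) n
              map_add' := ?_
              map_smul' := ?_ }, fun v => rfl⟩
    · intro v w
      have := congrFun (lp.coeFn_add v w) n
      simpa using this
    · intro m v
      have := congrFun (lp.coeFn_smul m v) n
      simpa using this
  choose coordL hcoordL using hcoord
  have key : ∀ n : ℕ, ∃ g : X →L[ℝ] ℝ, (∀ v, g (e v) = (v : ∀ _ : ℕ, ℝ) n) ∧ ‖g‖ ≤ c⁻¹ := by
    intro n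
    set flin : (LinearMap.range (e : (lp (fun _ : ℕ => ℝ) ⊤) →ₗ[ℝ] X)) →ₗ[ℝ] ℝ :=
      (coordL n).comp eq.symm.toLinearMap with hflin
    have hb : ∀ z, ‖flin z‖ ≤ c⁻¹ * ‖z‖ := by
      intro z
      set v := eq.symm z with hv
      have hev : e v = (z : X) := by
        have := LinearEquiv.ofInjective_symm_apply
          (f := (e : (lp (fun _ : ℕ => ℝ) ⊤) →ₗ[ℝ] X)) (h := hinj) z
        simpa [← heq, ← hv] using this
      have h1 : ‖flin z‖ = ‖(v : ∀ _ : ℕ, ℝ) n‖ := by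
        simp only [hflin, LinearMap.coe_comp, Function.comp_apply, LinearEquiv.coe_toLinearMap,
          hcoordL, ← hv]
      rw [h1]
      have h2 : ‖(v : ∀ _ : ℕ, ℝ) n‖ ≤ ‖v‖ := lp.norm_apply_le_norm ENNReal.top_ne_zero v n
      have h3 : c * ‖v‖ ≤ ‖e v‖ := he v
      have h4 : ‖e v‖ = ‖z‖ := by rw [hev]; rfl
      rw [h4] at h3
      have h5 : ‖v‖ ≤ c⁻¹ * ‖z‖ := by
        have h6 := mul_le_mul_of_nonneg_left h3 (le_of_lt (inv_pos.2 hc))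
        calc ‖v‖ = c⁻¹ * (c * ‖v‖) := by
              rw [← mul_assoc, inv_mul_cancel₀ (ne_of_gt hc), one_mul]
          _ ≤ c⁻¹ * ‖z‖ := h6
      linarith
    set fcont := flin.mkContinuous c⁻¹ hb with hfcont
    obtain ⟨g, hg1, hg2⟩ := exists_extension_norm_eq _ fcont
    refine ⟨g, ?_, ?_⟩
    · intro v
      have hmem : e v ∈ LinearMap.range (e : (lp (fun _ : ℕ => ℝ) ⊤) →ₗ[ℝ] X) :=
        LinearMap.mem_range_self _ v
      have := hg1 ⟨e v, hmem⟩
      rw [this]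
      have hsymm : eq.symm ⟨e v, hmem⟩ = v := by
        apply hinj
        have := LinearEquiv.ofInjective_symm_apply
          (f := (e : (lp (fun _ : ℕ => ℝ) ⊤) →ₗ[ℝ] X)) (h := hinj) ⟨e v, hmem⟩
        simpa [← heq] using this
      simp only [hfcont, LinearMap.mkContinuous_apply, hflin, LinearMap.coe_comp,
        Function.comp_apply, LinearEquiv.coe_toLinearMap, hsymm, hcoordL]
    · rw [hg2]
      exact flin.mkContinuous_norm_le (by positivity) hb
  choose g hg1 hg2 using key
  refine ⟨g, hg1, fun n x => ?_⟩
  calc |g n x| = ‖g n x‖ := rfl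
    _ ≤ ‖g n‖ * ‖x‖ := (g n).le_opNorm x
    _ ≤ c⁻¹ * ‖x‖ := by
        have := hg2 n
        have h0 : (0:ℝ) ≤ ‖x‖ := norm_nonneg x
        nlinarith

variable {X : Type*} [NormedAddCommGroup X] [NormedSpace ℝ X]

/-- Ultrafilter limit of a uniformly bounded sequence of functionals. -/
lemma ultra_functional (V : Ultrafilter ℕ) (g : ℕ → (X →L[ℝ] ℝ)) {C : ℝ} (hC : 0 ≤ C)
    (hg : ∀ n x, |g n x| ≤ C * ‖x‖) :
    ∃ h : X →L[ℝ] ℝ, (∀ x, Tendsto (fun n => g n x) (V : Filter ℕ) (𝓝 (h x))) ∧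
      ∀ x, |h x| ≤ C * ‖x‖ := by
  have hlim : ∀ x : X, ∃ a : ℝ, Tendsto (fun n => g n x) (V : Filter ℕ) (𝓝 a) := by
    intro x
    have hmem : ∀ n : ℕ, g n x ∈ Set.Icc (-(C * ‖x‖)) (C * ‖x‖) := by
      intro n
      rcases abs_le.1 (hg n x) with ⟨h1, h2⟩
      exact ⟨h1, h2⟩
    have hle : (Ultrafilter.map (fun n => g n x) V : Filter ℝ) ≤
        Filter.principal (Set.Icc (-(C * ‖x‖)) (C * ‖x‖)) := by
      rw [Ultrafilter.coe_map, Filter.le_principal_iff, Filter.mem_map]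
      exact Filter.univ_mem' hmem
    obtain ⟨a, -, ha⟩ := (isCompact_Icc (a := -(C * ‖x‖)) (b := C * ‖x‖)).ultrafilter_le_nhds
      (Ultrafilter.map (fun n => g n x) V) hle
    exact ⟨a, by rwa [Ultrafilter.coe_map] at ha⟩
  choose lim hlimspec using hlim
  have hadd : ∀ x y, lim (x + y) = lim x + lim y := by
    intro x y
    have h1 : Tendsto (fun n => g n (x + y)) (V : Filter ℕ) (𝓝 (lim x + lim y)) := by
      have := (hlimspec x).add (hlimspec y)
      simpa [map_add] using this
    exact tendsto_nhds_unique (hlimspec (x + y)) h1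
  have hsmul : ∀ (r : ℝ) x, lim (r • x) = r • lim x := by
    intro r x
    have h1 : Tendsto (fun n => g n (r • x)) (V : Filter ℕ) (𝓝 (r * lim x)) := by
      have := (hlimspec x).const_mul r
      simpa [map_smul, smul_eq_mul] using this
    simpa [smul_eq_mul] using tendsto_nhds_unique (hlimspec (r • x)) h1
  have hbound : ∀ x, |lim x| ≤ C * ‖x‖ := by
    intro x
    have hcl : IsClosed (Set.Icc (-(C * ‖x‖)) (C * ‖x‖)) := isClosed_Icc
    have hmem : ∀ᶠ n in (V : Filter ℕ), g n x ∈ Set.Icc (-(C * ‖x‖)) (C * ‖x‖) :=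
      Filter.univ_mem' fun n => abs_le.1 (hg n x)
    have := hcl.mem_of_tendsto (hlimspec x) hmem
    exact abs_le.2 this
  set hlinear : X →ₗ[ℝ] ℝ := { toFun := lim, map_add' := hadd, map_smul' := hsmul }
  refine ⟨hlinear.mkContinuous C (fun x => hbound x), fun x => hlimspec x, fun x => hbound x⟩

/-- Column extraction: given finitely many columns of elements of a weakly precompact set,
extract a common subsequence along which every column is weakly Cauchy. -/
lemma columns {K : Set X} (hK : WeaklyPrecompact K) :
    ∀ (L : ℕ) (k : ℕ → ℕ → X), (∀ i l, k i l ∈ K) →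
    ∃ φ : ℕ → ℕ, StrictMono φ ∧ ∀ l < L, ∀ f : X →L[ℝ] ℝ,
      ∃ a : ℝ, Tendsto (fun i => f (k (φ i) l)) atTop (𝓝 a) := by
  intro L
  induction L with
  | zero =>
    intro k hk
    exact ⟨id, strictMono_id, fun l hl => absurd hl (Nat.not_lt_zero l)⟩
  | succ L ih =>
    intro k hk
    obtain ⟨φ₁, hφ₁, hφ₁conv⟩ := hK (fun i => k i L) (fun i => hk i L)
    obtain ⟨φ₂, hφ₂, hφ₂conv⟩ := ih (fun i l => k (φ₁ i) l) (fun i l => hk (φ₁ i) l)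
    refine ⟨φ₁ ∘ φ₂, hφ₁.comp hφ₂, ?_⟩
    intro l hl f
    rcases Nat.lt_succ_iff_lt_or_eq.1 hl with hl' | rfl
    · exact hφ₂conv l hl' f
    · obtain ⟨a, ha⟩ := hφ₁conv f
      exact ⟨a, ha.comp hφ₂.tendsto_atTop⟩


end

end WPGAux

open WPGAux in
/-- a weakly precompactly generated Banach space contains no subspace
isomorphic to ℓ∞. -/
theorem WPG_no_linfty_subspace
    {X : Type*} [NormedAddCommGroup X] [NormedSpace ℝ X] [CompleteSpace X]
    (hWPG : ∃ K : Set X, WeaklyPrecompact K ∧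
      closure ((Submodule.span ℝ K : Submodule ℝ X) : Set X) = Set.univ) :
    ¬ ∃ (e : (lp (fun _ : ℕ => ℝ) ⊤) →L[ℝ] X) (c : ℝ), 0 < c ∧
      ∀ v : lp (fun _ : ℕ => ℝ) ⊤, c * ‖v‖ ≤ ‖e v‖ := by
  rintro ⟨e, c, hc, he⟩
  obtain ⟨K, hK, hKdense⟩ := hWPG
  classical
  -- rule out the degenerate case `K = ∅`
  rcases Set.eq_empty_or_nonempty K with rfl | ⟨k₀, hk₀⟩
  · have hall : ∀ x : X, x = 0 := by
      intro x
      have hx : x ∈ closure ((Submodule.span ℝ (∅ : Set X) : Submodule ℝ X) : Set X) := by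
        rw [hKdense]; trivial
      rw [Submodule.span_empty] at hx
      have hb : ((⊥ : Submodule ℝ X) : Set X) = {0} := Submodule.bot_coe
      rw [hb, isClosed_singleton.closure_eq] at hx
      exact hx
    have h1 := he (chi Set.univ)
    have h2 : e (chi Set.univ) = 0 := hall _
    rw [h2, norm_zero] at h1
    have h3 : ‖chi Set.univ‖ ≤ 0 := by nlinarith [norm_nonneg (chi Set.univ)]
    have h4 : chi Set.univ = 0 := by rwa [norm_le_zero_iff] at h3
    have h5 : (chi Set.univ : ∀ _ : ℕ, ℝ) 0 = (0 : ∀ _ : ℕ, ℝ) 0 := by rw [h4]; rfl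
    rw [chi_apply] at h5
    simp at h5
  -- coordinate functionals
  obtain ⟨g, hg1, hg2⟩ := exists_coord_functionals e hc he
  set ξ : ℝ → X := fun x => e (chi (Sx x)) with hξ
  -- approximation of each ξ x by a finite combination from K
  have happrox : ∀ x : ℝ, ∃ (n : ℕ) (cf : ℕ → ℝ) (kv : ℕ → X),
      (∀ l, kv l ∈ K) ∧ ‖ξ x - ∑ l ∈ Finset.range n, cf l • kv l‖ < c/8 := by
    intro x
    have hx : ξ x ∈ closure ((Submodule.span ℝ K : Submodule ℝ X) : Set X) := by
      rw [hKdense]; trivial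
    rw [Metric.mem_closure_iff] at hx
    obtain ⟨y, hy, hyd⟩ := hx (c/8) (by positivity)
    obtain ⟨n, f, gv, hsum⟩ := Submodule.mem_span_set'.1 hy
    refine ⟨n, (fun l => if h : l < n then f ⟨l, h⟩ else 0),
      (fun l => if h : l < n then (gv ⟨l, h⟩ : X) else k₀), ?_, ?_⟩
    · intro l
      by_cases h : l < n
      · simpa [h] using (gv ⟨l, h⟩).2
      · simpa [h] using hk₀
    · have hs : ∑ l ∈ Finset.range n,
          ((if h : l < n then f ⟨l, h⟩ else 0) • (if h : l < n then (gv ⟨l, h⟩ : X) else k₀)) = y := by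
        rw [← hsum, ← Fin.sum_univ_eq_sum_range
          (fun l => (if h : l < n then f ⟨l, h⟩ else 0) • (if h : l < n then (gv ⟨l, h⟩ : X) else k₀)) n]
        apply Finset.sum_congr rfl
        intro i _
        simp [i.2]
      rw [hs, ← dist_eq_norm]
      exact hyd
  choose nn cf kv hkvK hap using happrox
  -- pigeonhole on the complexity of the approximations
  obtain ⟨b, hb⟩ : ∃ b : ℕ × ℕ,
      {x : ℝ | (nn x, ⌈∑ l ∈ Finset.range (nn x), |cf x l|⌉₊) = b}.Infinite := by
    by_contra hcon
    push_neg at hcon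
    have hfin : ∀ b : ℕ × ℕ,
        {x : ℝ | (nn x, ⌈∑ l ∈ Finset.range (nn x), |cf x l|⌉₊) = b}.Finite := by
      intro b
      exact hcon b
    have hcov : (Set.univ : Set ℝ) ⊆
        ⋃ b : ℕ × ℕ, {x : ℝ | (nn x, ⌈∑ l ∈ Finset.range (nn x), |cf x l|⌉₊) = b} := by
      intro x _
      exact Set.mem_iUnion.2 ⟨_, rfl⟩
    exact Cardinal.not_countable_real
      (Set.Countable.mono hcov (Set.countable_iUnion fun b => (hfin b).countable))
  set L : ℕ := b.1 with hLdef
  set Λ : ℝ := (b.2 : ℝ) with hΛdef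
  set Emb := hb.natEmbedding with hEmb
  set idx : ℕ → ℝ := fun i => (Emb i : ℝ) with hidx
  have hidxinj : Function.Injective idx := by
    intro i j h
    exact Emb.injective (Subtype.coe_injective h)
  have hnn : ∀ i, nn (idx i) = L := fun i => congrArg Prod.fst (Emb i).2
  have hΛ : ∀ i, ∑ l ∈ Finset.range L, |cf (idx i) l| ≤ Λ := by
    intro i
    have h1 : (⌈∑ l ∈ Finset.range (nn (idx i)), |cf (idx i) l|⌉₊ : ℕ) = b.2 :=
      congrArg Prod.snd (Emb i).2
    have h2 := Nat.le_ceil (∑ l ∈ Finset.range (nn (idx i)), |cf (idx i) l|)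
    rw [h1] at h2
    rw [← hnn i]
    exact h2
  have hcfbound : ∀ i l, l < L → |cf (idx i) l| ≤ Λ := by
    intro i l hl
    refine le_trans ?_ (hΛ i)
    exact Finset.single_le_sum (f := fun l => |cf (idx i) l|)
      (fun t _ => abs_nonneg _) (Finset.mem_range.2 hl)
  -- columns extraction
  obtain ⟨φ, hφ, hcols⟩ := columns hK L (fun i l => kv (idx i) l) (fun i l => hkvK (idx i) l)
  -- Bolzano–Weierstrass on the coefficient vectors
  have hboxcpt : IsCompact (Set.pi Set.univ (fun _ : Fin L => Set.Icc (-Λ) Λ)) :=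
    isCompact_univ_pi fun _ => isCompact_Icc
  have hboxmem : ∀ i, (fun l : Fin L => cf (idx (φ i)) l) ∈
      Set.pi Set.univ (fun _ : Fin L => Set.Icc (-Λ) Λ) := by
    intro i
    intro l _
    exact abs_le.1 (hcfbound (φ i) l l.2)
  obtain ⟨γ, -, ψ, hψ, hγ⟩ := hboxcpt.tendsto_subseq hboxmem
  set θ : ℕ → ℕ := φ ∘ ψ with hθdef
  set Y : ℕ → X := fun i => ∑ l ∈ Finset.range L, cf (idx i) l • kv (idx i) l with hY
  -- every functional converges along the final subsequence
  have hAll : ∀ f : X →L[ℝ] ℝ, ∃ A : ℝ, Tendsto (fun m => f (Y (θ m))) atTop (𝓝 A) := by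
    intro f
    have hcol : ∀ l : Fin L, ∃ a : ℝ,
        Tendsto (fun m => f (kv (idx (θ m)) l)) atTop (𝓝 a) := by
      intro l
      obtain ⟨a, ha⟩ := hcols l l.2 f
      exact ⟨a, ha.comp hψ.tendsto_atTop⟩
    choose aa haa using hcol
    refine ⟨∑ l : Fin L, γ l * aa l, ?_⟩
    have hfY : ∀ m, f (Y (θ m)) = ∑ l : Fin L, cf (idx (θ m)) l * f (kv (idx (θ m)) l) := by
      intro m
      rw [hY]
      simp only [map_sum, map_smul, smul_eq_mul]
      rw [← Fin.sum_univ_eq_sum_range (fun l => cf (idx (θ m)) l * f (kv (idx (θ m)) l)) L]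
    simp only [hfY]
    apply tendsto_finset_sum
    intro l _
    have hcoef : Tendsto (fun m => cf (idx (θ m)) l) atTop (𝓝 (γ l)) := by
      have := tendsto_pi_nhds.1 hγ l
      exact this
    exact hcoef.mul (haa l)
  -- the killer functional
  set r : ℕ → ℝ := fun m => idx (θ m) with hr
  have hrinj : Function.Injective r := by
    intro i j h
    exact (hφ.comp hψ).injective (hidxinj h)
  set Cset : ℕ → Set ℕ := fun M => {n | ∀ m ≤ M, (n ∈ Sx (r m) ↔ Even m)} with hCset
  have hCinf : ∀ M, (Cset M).Infinite := by
    intro M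
    have h := indep_Sx (fun j : Fin (M+1) => r j) (fun i j hij => by
        have := hrinj hij
        exact Fin.ext (by exact_mod_cast congrArg id this))
      (fun j => Even (j : ℕ))
    apply Set.Infinite.mono _ h
    intro n hn
    intro m hm
    exact hn ⟨m, Nat.lt_succ_of_le hm⟩
  have hCanti : ∀ m M, m ≤ M → Cset M ⊆ Cset m := by
    intro m M hmM n hn
    intro m' hm'
    exact hn m' (le_trans hm' hmM)
  -- a point in each Cset
  have hpick : ∀ M : ℕ, ∃ n, n ∈ Cset M := fun M => (hCinf M).nonempty
  choose sq hsq using hpick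
  set V : Ultrafilter ℕ := Ultrafilter.map sq (Filter.hyperfilter ℕ) with hV
  have hCV : ∀ m, Cset m ∈ V := by
    intro m
    rw [hV, Ultrafilter.mem_map]
    apply Filter.mem_hyperfilter_of_finite_compl
    apply Set.Finite.subset (Set.finite_Iio m)
    intro M hM
    simp only [Set.mem_compl_iff, Set.mem_preimage] at hM
    by_contra hcon
    simp only [Set.mem_Iio, not_lt] at hcon
    exact hM (hCanti m M hcon (hsq M))
  obtain ⟨h, hspec, hbound⟩ := ultra_functional V g (by positivity) hg2
  -- value of h on the indicator elements
  have hxi : ∀ m, h (ξ (r m)) = if Even m then (1:ℝ) else 0 := by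
    intro m
    have hGn : ∀ n ∈ Cset m, g n (ξ (r m)) = (if Even m then (1:ℝ) else 0) := by
      intro n hn
      have h1 : g n (ξ (r m)) = (chi (Sx (r m)) : ∀ _ : ℕ, ℝ) n := hg1 n _
      rw [h1, chi_apply]
      have h2 := hn m (le_refl m)
      by_cases hev : Even m
      · rw [if_pos (h2.2 hev), if_pos hev]
      · rw [if_neg (fun hmem => hev (h2.1 hmem)), if_neg hev]
    have hconst : Tendsto (fun n => g n (ξ (r m))) (V : Filter ℕ)
        (𝓝 (if Even m then (1:ℝ) else 0)) := by
      apply Tendsto.congr' _ tendsto_const_nhds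
      exact Filter.eventuallyEq_of_mem (hCV m) (fun n hn => (hGn n hn).symm)
    exact tendsto_nhds_unique (hspec (ξ (r m))) hconst
  -- h (Y (θ m)) is close to h (ξ (r m))
  have hclose : ∀ m, |h (Y (θ m)) - h (ξ (r m))| ≤ 1/8 := by
    intro m
    have h1 : h (Y (θ m)) - h (ξ (r m)) = h (Y (θ m) - ξ (r m)) := (map_sub h _ _).symm
    rw [h1]
    have h2 := hbound (Y (θ m) - ξ (r m))
    have h3 : ‖Y (θ m) - ξ (r m)‖ ≤ c/8 := by
      rw [norm_sub_rev]
      have h4 := hap (r m)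
      rw [hnn (θ m)] at h4
      exact le_of_lt h4
    have h5 : c⁻¹ * ‖Y (θ m) - ξ (r m)‖ ≤ c⁻¹ * (c/8) :=
      mul_le_mul_of_nonneg_left h3 (by positivity)
    have h6 : c⁻¹ * (c/8) = 1/8 := by field_simp
    linarith [h2, h5.trans_eq h6]
  obtain ⟨A, hA⟩ := hAll h
  -- even and odd subsequences give contradictory limits
  have hevenmono : StrictMono (fun j : ℕ => 2 * j) := by
    intro a b hab
    show 2 * a < 2 * b
    omega
  have hoddmono : StrictMono (fun j : ℕ => 2 * j + 1) := by
    intro a b hab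
    show 2 * a + 1 < 2 * b + 1
    omega
  have hAge : (7:ℝ)/8 ≤ A := by
    refine ge_of_tendsto (hA.comp hevenmono.tendsto_atTop) ?_
    apply Eventually.of_forall
    intro j
    have hev : Even (2 * j) := ⟨j, by ring⟩
    have := hclose (2 * j)
    rw [hxi (2 * j), if_pos hev] at this
    have := abs_le.1 this
    simp only [Function.comp_apply]
    linarith [this.1]
  have hAle : A ≤ (1:ℝ)/8 := by
    refine le_of_tendsto (hA.comp hoddmono.tendsto_atTop) ?_
    apply Eventually.of_forall
    intro j
    have hodd : ¬ Even (2 * j + 1) := by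
      simp [Nat.even_add_one, parity_simps]
    have := hclose (2 * j + 1)
    rw [hxi (2 * j + 1), if_neg hodd] at this
    have := abs_le.1 this
    simp only [Function.comp_apply]
    linarith [this.2]
  linarith
end
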